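/- arXiv:2405.12992 — 6 statements merged into one kernel-verified Lean document; each statement's English description precedes it below -/
import Mathlib

section
/- Let E be a Euclidean space (a finite-dimensional real inner product space, of any dimension) and let K ⊆ E × E be MW-convex. If there exists a witness for K, then there exists a sequence (u_n)_{n∈ℕ} in E such that (u_n, u_{n+1}) ∈ K for all n ∈ ℕ. -/
open Pointwise

/-- The recession cone of a set `K`. -/
def recCone {E : Type*} [AddCommGroup E] [Module ℝ E] (K : Set E) : Set E :=
  {z | ∀ w ∈ K, ∀ l : ℝ, 0 ≤ l → w + l • z ∈ K}

/-- A set is MW-convex if it is closed, convex, and is the sum of a compact convex set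
and its recession cone. -/
def IsMWConvex {E : Type*} [NormedAddCommGroup E] [NormedSpace ℝ E] (K : Set E) : Prop :=
  IsClosed K ∧ Convex ℝ K ∧
    ∃ K' : Set E, IsCompact K' ∧ Convex ℝ K' ∧ K = K' + recCone K

/-- A witness of non-termination for a relation `K ⊆ E × E`: a linear map `M`, a closed
cone `C`, and vectors `v, w`, such that `M C ⊆ C`, `(x, M x) ∈ rec K` for `x ∈ C`,
`(v, w) ∈ K` and `w - v ∈ C`. -/
def HasWitness {E : Type*} [NormedAddCommGroup E] [NormedSpace ℝ E] (K : Set (E × E)) : Prop :=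
  ∃ (M : E →ₗ[ℝ] E) (C : Set E) (v w : E),
    IsClosed C ∧
    (∀ x ∈ C, ∀ l : ℝ, 0 ≤ l → l • x ∈ C) ∧
    (∀ x ∈ C, M x ∈ C) ∧
    (∀ x ∈ C, ((x, M x) : E × E) ∈ recCone K) ∧
    (v, w) ∈ K ∧
    w - v ∈ C


theorem witness_implies_sequence
    {E : Type*} [NormedAddCommGroup E] [InnerProductSpace ℝ E] [FiniteDimensional ℝ E]
    (K : Set (E × E)) (hK : IsMWConvex K) (hwit : HasWitness K) :
    ∃ u : ℕ → E, ∀ n : ℕ, (u n, u (n + 1)) ∈ K := by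
  obtain ⟨M, C, v, w, _, _, hMC, hrec, hvw, hwv⟩ := hwit
  have hxC : ∀ n, (M ^ n) (w - v) ∈ C := by
    intro n
    induction n with
    | zero => simpa using hwv
    | succ n ih =>
      have h : (M ^ (n + 1)) (w - v) = M ((M ^ n) (w - v)) := by
        rw [pow_succ']; rfl
      rw [h]; exact hMC _ ih
  refine ⟨fun n => v + ∑ i ∈ Finset.range n, (M ^ i) (w - v), ?_⟩
  intro n
  induction n with
  | zero => simpa using hvw
  | succ n ih =>
    have key := hrec _ (hxC n) _ ih 1 zero_le_one
    have h : (M ^ (n + 1)) (w - v) = M ((M ^ n) (w - v)) := by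
      rw [pow_succ']; rfl
    simp only [one_smul] at key
    convert key using 2 <;>
      · simp only [Finset.sum_range_succ, h, Prod.mk_add_mk]
        abel
end

section
/- Let E be a Euclidean space of dimension 1 and let K ⊆ E × E be MW-convex. Suppose (u_n)_{n∈ℕ} is a sequence in E with (u_n, u_{n+1}) ∈ K for all n ∈ ℕ, and suppose γ ∈ Cone(D_u) satisfies (0, γ) ∈ rec(K) (note that γ = 0 always satisfies these conditions). Then there exist a real number a ≠ 0, a closed convex cone C ⊆ E, and points x, y ∈ E such that: (i) aC ⊆ C; (ii) for all c ∈ C, (c, ac) ∈ rec(K); (iii) (x, y) ∈ K; (iv) y − x ∈ C; (v) γ ∈ C. -/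
open Pointwise

open Filter Topology

/-- The set of principal directions of a sequence: unit vectors `z` such that some
subsequence has norm tending to infinity and direction tending to `z`. -/
def principalDirections {E : Type*} [NormedAddCommGroup E] [InnerProductSpace ℝ E]
    (u : ℕ → E) : Set E :=
  {z | ‖z‖ = 1 ∧ ∃ φ : ℕ → ℕ, StrictMono φ ∧
    Tendsto (fun n => ‖u (φ n)‖) atTop atTop ∧
    Tendsto (fun n => ‖u (φ n)‖⁻¹ • u (φ n)) atTop (nhds z)}

/-- The conic hull of a set: all finite nonnegative linear combinations of its elements
(including `0`). -/
def coneHull {E : Type*} [AddCommGroup E] [Module ℝ E] (S : Set E) : Set E :=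
  {y | ∃ (m : ℕ) (c : Fin m → ℝ) (x : Fin m → E),
    (∀ i, 0 ≤ c i) ∧ (∀ i, x i ∈ S) ∧ y = ∑ i, c i • x i}

section Aux

variable {E : Type*} [AddCommGroup E] [Module ℝ E]

lemma recCone_zero_mem (K : Set E) : (0 : E) ∈ recCone K := by
  intro w hw l _
  simpa using hw

lemma recCone_smul_mem {K : Set E} {z : E} (hz : z ∈ recCone K) {t : ℝ} (ht : 0 ≤ t) :
    t • z ∈ recCone K := by
  intro w hw l hl
  simpa [smul_smul] using hz w hw (l * t) (mul_nonneg hl ht)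

lemma recCone_convex {K : Set E} (hK : Convex ℝ K) : Convex ℝ (recCone K) := by
  intro z₁ hz₁ z₂ hz₂ a b ha hb hab
  intro w hw l hl
  have h := hK (hz₁ w hw l hl) (hz₂ w hw l hl) ha hb hab
  have heq : a • (w + l • z₁) + b • (w + l • z₂) = w + l • (a • z₁ + b • z₂) := by
    have hw1 : a • w + b • w = w := by rw [← add_smul, hab, one_smul]
    rw [smul_add, smul_add, smul_add, smul_smul l a, smul_smul l b, mul_comm l a, mul_comm l b,
      ← smul_smul a l, ← smul_smul b l]
    nth_rewrite 3 [← hw1]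
    abel
  rwa [heq] at h

end Aux

set_option maxHeartbeats 2000000 in
theorem witness_dim_one
    {E : Type*} [NormedAddCommGroup E] [InnerProductSpace ℝ E] [FiniteDimensional ℝ E]
    (hdim : Module.finrank ℝ E = 1)
    (K : Set (E × E)) (hK : IsMWConvex K)
    (u : ℕ → E) (hu : ∀ n : ℕ, (u n, u (n + 1)) ∈ K)
    (γ : E) (hγ : γ ∈ coneHull (principalDirections u))
    (hγrec : ((0 : E), γ) ∈ recCone K) :
    ∃ (a : ℝ) (C : Set E) (x y : E),
      a ≠ 0 ∧
      IsClosed C ∧ Convex ℝ C ∧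
      (∀ c ∈ C, ∀ l : ℝ, 0 ≤ l → l • c ∈ C) ∧
      (∀ c ∈ C, a • c ∈ C) ∧
      (∀ c ∈ C, ((c, a • c) : E × E) ∈ recCone K) ∧
      (x, y) ∈ K ∧
      y - x ∈ C ∧
      γ ∈ C := by
  obtain ⟨K_closed, K_convex, K', hK'cpt, hK'conv, hKeq⟩ := hK
  -- a unit vector spanning E
  have hnt : Nontrivial E := by
    apply Module.nontrivial_of_finrank_pos (R := ℝ); rw [hdim]; norm_num
  obtain ⟨v, hv⟩ := exists_ne (0 : E)
  set e₀ : E := ‖v‖⁻¹ • v with he₀def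
  have he₀ : ‖e₀‖ = 1 := by
    rw [he₀def, norm_smul, norm_inv, norm_norm, inv_mul_cancel₀ (norm_ne_zero_iff.2 hv)]
  have he₀ne : e₀ ≠ 0 := by
    intro h; rw [h, norm_zero] at he₀; norm_num at he₀
  -- spanning property, for any unit vector proportional to e₀
  have hspan₀ : ∀ x : E, ∃ c : ℝ, c • e₀ = x := by
    intro x
    have h1 : Submodule.span ℝ {e₀} = ⊤ := by
      apply Submodule.eq_top_of_finrank_eq
      rw [finrank_span_singleton he₀ne, hdim]
    have : x ∈ Submodule.span ℝ {e₀} := h1 ▸ Submodule.mem_top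
    exact Submodule.mem_span_singleton.1 this
  have hspan : ∀ x : E, ((inner ℝ x e₀ : ℝ)) • e₀ = x := by
    intro x
    obtain ⟨c, hc⟩ := hspan₀ x
    have : (inner ℝ x e₀ : ℝ) = c := by
      rw [← hc, real_inner_smul_left, real_inner_self_eq_norm_sq, he₀]
      ring
    rw [this, hc]
  -- the same for -e₀
  have hspan' : ∀ (ε : E), (ε = e₀ ∨ ε = -e₀) → (‖ε‖ = 1 ∧ ∀ x : E, ((inner ℝ x ε : ℝ)) • ε = x) := by
    rintro ε (rfl | rfl)
    · exact ⟨he₀, hspan⟩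
    · refine ⟨by simpa using he₀, fun x => ?_⟩
      rw [inner_neg_right, neg_smul, smul_neg, neg_neg, hspan]
  -- If inner ℝ γ ε > 0 then the ε-coordinates of u are unbounded above
  have gpos_sup : ∀ ε : E, ‖ε‖ = 1 → (∀ x : E, ((inner ℝ x ε : ℝ)) • ε = x) →
      0 < (inner ℝ γ ε : ℝ) → ∀ B : ℝ, ∃ n, B < (inner ℝ (u n) ε : ℝ) := by
    intro ε hε hsp hpos B
    obtain ⟨m, c, x, hc, hx, hsum⟩ := hγ
    have hsum' : (inner ℝ γ ε : ℝ) = ∑ i, c i * (inner ℝ (x i) ε : ℝ) := by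
      rw [hsum, sum_inner]
      congr 1; funext i; rw [real_inner_smul_left]
    have : ∃ i, 0 < c i * (inner ℝ (x i) ε : ℝ) := by
      by_contra h
      push_neg at h
      have : (inner ℝ γ ε : ℝ) ≤ 0 := by
        rw [hsum']; exact Finset.sum_nonpos fun i _ => h i
      linarith
    obtain ⟨i, hi⟩ := this
    have hci : 0 < c i := by
      rcases (hc i).lt_or_eq with h | h
      · exact h
      · exfalso; rw [← h] at hi; simp at hi
    have hxipos : 0 < (inner ℝ (x i) ε : ℝ) := by
      by_contra h
      push_neg at h
      nlinarith
    obtain ⟨hxin, φ, hφ, hφnorm, hφdir⟩ := hx i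
    -- x i = ε
    have hxi : x i = ε := by
      have h1 : ((inner ℝ (x i) ε : ℝ)) • ε = x i := hsp (x i)
      have h2 : |(inner ℝ (x i) ε : ℝ)| = 1 := by
        have := congrArg norm h1
        rw [norm_smul, hε, mul_one, hxin, Real.norm_eq_abs] at this
        exact this
      have h3 : (inner ℝ (x i) ε : ℝ) = 1 := by
        rcases abs_eq (by norm_num : (0:ℝ) ≤ 1) |>.1 h2 with h | h
        · exact h
        · exfalso; rw [h] at hxipos; norm_num at hxipos
      rw [← h1, h3, one_smul]
    -- inner ℝ (u (φ n)) ε tends to atTop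
    have hcont : Tendsto (fun n => (inner ℝ (‖u (φ n)‖⁻¹ • u (φ n)) ε : ℝ)) atTop
        (nhds (inner ℝ (x i) ε : ℝ)) := by
      exact ((continuous_id.inner continuous_const).tendsto _).comp hφdir
    have hεε : (inner ℝ (x i) ε : ℝ) = 1 := by
      rw [hxi, real_inner_self_eq_norm_sq, hε]; norm_num
    rw [hεε] at hcont
    have hmul : Tendsto (fun n => (inner ℝ (‖u (φ n)‖⁻¹ • u (φ n)) ε : ℝ) * ‖u (φ n)‖)
        atTop atTop := hcont.pos_mul_atTop one_pos hφnorm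
    have heq : ∀ᶠ n in atTop, (inner ℝ (‖u (φ n)‖⁻¹ • u (φ n)) ε : ℝ) * ‖u (φ n)‖
        = (inner ℝ (u (φ n)) ε : ℝ) := by
      filter_upwards [hφnorm.eventually_gt_atTop 0] with n hn
      rw [real_inner_smul_left]
      field_simp
    have : Tendsto (fun n => (inner ℝ (u (φ n)) ε : ℝ)) atTop atTop := hmul.congr' heq
    obtain ⟨n, hn⟩ := (this.eventually_gt_atTop B).exists
    exact ⟨φ n, hn⟩
  -- construction in the cone case
  have caseCone : ∀ ε : E, ‖ε‖ = 1 → (∀ x : E, ((inner ℝ x ε : ℝ)) • ε = x) →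
      0 ≤ (inner ℝ γ ε : ℝ) → (∃ a : ℝ, 0 < a ∧ ((ε, a • ε) : E × E) ∈ recCone K) →
      (∃ n, (inner ℝ (u n) ε : ℝ) ≤ (inner ℝ (u (n+1)) ε : ℝ)) →
      ∃ (a : ℝ) (C : Set E) (x y : E),
      a ≠ 0 ∧ IsClosed C ∧ Convex ℝ C ∧
      (∀ c ∈ C, ∀ l : ℝ, 0 ≤ l → l • c ∈ C) ∧
      (∀ c ∈ C, a • c ∈ C) ∧
      (∀ c ∈ C, ((c, a • c) : E × E) ∈ recCone K) ∧
      (x, y) ∈ K ∧ y - x ∈ C ∧ γ ∈ C := by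
    intro ε hε hsp hge ⟨a, ha, hae⟩ ⟨n, hn⟩
    refine ⟨a, {c : E | 0 ≤ (inner ℝ c ε : ℝ)}, u n, u (n+1), ne_of_gt ha, ?_, ?_, ?_, ?_, ?_, hu n, ?_, hge⟩
    · exact isClosed_le continuous_const (continuous_id.inner continuous_const)
    · intro c₁ h₁ c₂ h₂ s t hs ht hst
      simp only [Set.mem_setOf_eq] at *
      rw [inner_add_left, real_inner_smul_left, real_inner_smul_left]
      have := mul_nonneg hs h₁
      have := mul_nonneg ht h₂
      linarith
    · intro c hc l hl
      simp only [Set.mem_setOf_eq] at *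
      rw [real_inner_smul_left]
      exact mul_nonneg hl hc
    · intro c hc
      simp only [Set.mem_setOf_eq] at *
      rw [real_inner_smul_left]
      exact mul_nonneg ha.le hc
    · intro c hc
      simp only [Set.mem_setOf_eq] at hc
      have hrep : ((c, a • c) : E × E) = (inner ℝ c ε : ℝ) • ((ε, a • ε) : E × E) := by
        have h1 : (inner ℝ c ε : ℝ) • ε = c := hsp c
        have h2 : (inner ℝ c ε : ℝ) • (a • ε) = a • c := by
          rw [smul_comm, h1]
        rw [Prod.smul_mk, h1, h2]
      rw [hrep]
      exact recCone_smul_mem hae hc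
    · simp only [Set.mem_setOf_eq]
      rw [inner_sub_left]
      linarith
  -- fixed point case
  have caseFP : (∃ x : E, (x, x) ∈ K) → γ = 0 →
      ∃ (a : ℝ) (C : Set E) (x y : E),
      a ≠ 0 ∧ IsClosed C ∧ Convex ℝ C ∧
      (∀ c ∈ C, ∀ l : ℝ, 0 ≤ l → l • c ∈ C) ∧
      (∀ c ∈ C, a • c ∈ C) ∧
      (∀ c ∈ C, ((c, a • c) : E × E) ∈ recCone K) ∧
      (x, y) ∈ K ∧ y - x ∈ C ∧ γ ∈ C := by
    rintro ⟨x, hx⟩ hγ0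
    refine ⟨1, {(0 : E)}, x, x, one_ne_zero, isClosed_singleton, convex_singleton 0, ?_, ?_, ?_, hx, by simp, by simp [hγ0]⟩
    · intro c hc l _; simp only [Set.mem_singleton_iff] at *; simp [hc]
    · intro c hc; simp only [Set.mem_singleton_iff] at *; simp [hc]
    · intro c hc; simp only [Set.mem_singleton_iff] at hc; subst hc
      intro w hw l _
      simpa [Prod.mk_zero_zero] using hw
  -- existence of an up-step from unboundedness
  have upstep : ∀ ε : E, (∀ B : ℝ, ∃ n, B < (inner ℝ (u n) ε : ℝ)) →
      ∃ n, (inner ℝ (u n) ε : ℝ) ≤ (inner ℝ (u (n+1)) ε : ℝ) := by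
    intro ε hsup
    by_contra h
    push_neg at h
    have hanti : ∀ n, (inner ℝ (u n) ε : ℝ) ≤ (inner ℝ (u 0) ε : ℝ) := by
      intro n
      induction n with
      | zero => exact le_refl _
      | succ k ih => exact le_trans (h k).le ih
    obtain ⟨n, hn⟩ := hsup (inner ℝ (u 0) ε : ℝ)
    exact absurd (hanti n) (not_le.2 hn)
  -- fixed point from an up step and a down step
  have fploop : (∃ i, (inner ℝ (u i) e₀ : ℝ) ≤ (inner ℝ (u (i+1)) e₀ : ℝ)) →
      (∃ j, (inner ℝ (u (j+1)) e₀ : ℝ) ≤ (inner ℝ (u j) e₀ : ℝ)) →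
      ∃ x : E, (x, x) ∈ K := by
    rintro ⟨i, hi⟩ ⟨j, hj⟩
    set Ui := (inner ℝ (u i) e₀ : ℝ)
    set Ui1 := (inner ℝ (u (i+1)) e₀ : ℝ)
    set Uj := (inner ℝ (u j) e₀ : ℝ)
    set Uj1 := (inner ℝ (u (j+1)) e₀ : ℝ)
    have hueq : ∀ m k : ℕ, (inner ℝ (u m) e₀ : ℝ) = (inner ℝ (u k) e₀ : ℝ) → u m = u k := by
      intro m k h
      rw [← hspan (u m), ← hspan (u k), h]
    by_cases h1 : Ui1 = Ui
    · refine ⟨u i, ?_⟩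
      have h := hueq (i+1) i h1
      have hk := hu i
      rwa [h] at hk
    by_cases h2 : Uj1 = Uj
    · refine ⟨u j, ?_⟩
      have h := hueq (j+1) j h2
      have hk := hu j
      rwa [h] at hk
    have hs1 : 0 < Ui1 - Ui := by
      rcases hi.lt_or_eq with h | h
      · linarith
      · exact absurd h.symm h1
    have hs2 : 0 < Uj - Uj1 := by
      rcases hj.lt_or_eq with h | h
      · linarith
      · exact absurd h h2
    set s1 := Ui1 - Ui
    set s2 := Uj - Uj1
    set t := s2 / (s1 + s2) with htdef
    have hts : 0 < s1 + s2 := by linarith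
    have ht0 : 0 ≤ t := div_nonneg hs2.le hts.le
    have ht1 : 0 ≤ 1 - t := by
      have : t ≤ 1 := by
        rw [htdef, div_le_one hts]; linarith
      linarith
    have hmem := K_convex (hu i) (hu j) ht0 ht1 (by ring)
    set x := t • u i + (1 - t) • u j with hxdef
    set y := t • u (i+1) + (1 - t) • u (j+1) with hydef
    have hmem' : ((x, y) : E × E) ∈ K := by
      simpa [Prod.smul_mk, Prod.mk_add_mk, hxdef, hydef] using hmem
    have hinner : (inner ℝ (y - x) e₀ : ℝ) = 0 := by
      have hyx : y - x = t • (u (i+1) - u i) + (1 - t) • (u (j+1) - u j) := by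
        rw [hxdef, hydef, smul_sub, smul_sub]
        abel
      rw [hyx, inner_add_left, real_inner_smul_left, real_inner_smul_left,
        inner_sub_left, inner_sub_left]
      show t * (Ui1 - Ui) + (1 - t) * (Uj1 - Uj) = 0
      have h2' : Uj1 - Uj = -s2 := by show Uj1 - Uj = -(Uj - Uj1); ring
      have h1' : Ui1 - Ui = s1 := rfl
      rw [h1', h2', htdef]
      field_simp
      ring
    have hyx0 : y - x = 0 := by
      conv_lhs => rw [← hspan (y - x)]
      rw [hinner, zero_smul]
    have hyx : y = x := by
      have := sub_eq_zero.1 hyx0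
      exact this
    exact ⟨x, by rwa [hyx] at hmem'⟩
  -- core separation lemma
  have core : ∀ ε : E, ‖ε‖ = 1 → (∀ x : E, ((inner ℝ x ε : ℝ)) • ε = x) →
      (∀ B : ℝ, ∃ n, B < (inner ℝ (u n) ε : ℝ)) →
      (∃ a : ℝ, 0 < a ∧ ((ε, a • ε) : E × E) ∈ recCone K) ∨
      ((inner ℝ γ ε : ℝ) ≤ 0 ∧ ∃ j, (inner ℝ (u (j+1)) ε : ℝ) ≤ (inner ℝ (u j) ε : ℝ)) := by
    intro ε hε hsp hsup
    by_cases hcone : ∃ a : ℝ, 0 < a ∧ ((ε, a • ε) : E × E) ∈ recCone K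
    · exact Or.inl hcone
    right
    have hRQ : ∀ r ∈ recCone K, ¬(0 < (inner ℝ r.1 ε : ℝ) ∧ 0 < (inner ℝ r.2 ε : ℝ)) := by
      rintro r hr ⟨hp, hq⟩
      apply hcone
      refine ⟨(inner ℝ r.2 ε : ℝ) / (inner ℝ r.1 ε : ℝ), div_pos hq hp, ?_⟩
      have hre : ((ε, ((inner ℝ r.2 ε : ℝ) / (inner ℝ r.1 ε : ℝ)) • ε) : E × E)
          = ((inner ℝ r.1 ε : ℝ))⁻¹ • r := by
        have h1 : ((inner ℝ r.1 ε : ℝ))⁻¹ • r.1 = ε := by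
          rw [inv_smul_eq_iff₀ (ne_of_gt hp)]
          exact (hsp r.1).symm
        have h2 : ((inner ℝ r.1 ε : ℝ))⁻¹ • r.2 = ((inner ℝ r.2 ε : ℝ) / (inner ℝ r.1 ε : ℝ)) • ε := by
          rw [div_eq_inv_mul, ← smul_smul, hsp r.2]
        exact Prod.ext h1.symm h2.symm
      rw [hre]
      exact recCone_smul_mem hr (inv_nonneg.2 hp.le)
    set Q1 : Set (E × E) := {p | 0 < (inner ℝ p.1 ε : ℝ) ∧ 0 < (inner ℝ p.2 ε : ℝ)} with hQ1def
    have hQ1open : IsOpen Q1 :=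
      IsOpen.and (isOpen_lt continuous_const (continuous_fst.inner continuous_const))
        (isOpen_lt continuous_const (continuous_snd.inner continuous_const))
    have hQ1conv : Convex ℝ Q1 := by
      rintro p ⟨hp1, hp2⟩ q ⟨hq1, hq2⟩ a b ha hb hab
      have hcomb : ∀ (P Q : ℝ), 0 < P → 0 < Q → 0 < a * P + b * Q := by
        intro P Q hP hQ
        rcases ha.lt_or_eq with ha' | ha'
        · nlinarith
        · rw [← ha'] at hab ⊢; nlinarith
      constructor
      · have : ((a • p + b • q : E × E)).1 = a • p.1 + b • q.1 := rfl
        rw [this, inner_add_left, real_inner_smul_left, real_inner_smul_left]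
        exact hcomb _ _ hp1 hq1
      · have : ((a • p + b • q : E × E)).2 = a • p.2 + b • q.2 := rfl
        rw [this, inner_add_left, real_inner_smul_left, real_inner_smul_left]
        exact hcomb _ _ hp2 hq2
    have hdisj : Disjoint Q1 (recCone K) :=
      Set.disjoint_left.2 fun r hrQ hrR => hRQ r hrR hrQ
    obtain ⟨f, s, hfQ, hfR⟩ :=
      geometric_hahn_banach_open hQ1conv hQ1open (recCone_convex K_convex) hdisj
    have hs0 : s ≤ 0 := by simpa using hfR 0 (recCone_zero_mem K)
    have hfRnn : ∀ r ∈ recCone K, 0 ≤ f r := by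
      intro r hr
      by_contra hneg
      push_neg at hneg
      have hl : 0 ≤ (s - 1) / f r := by
        rw [div_nonneg_iff]
        right
        exact ⟨by linarith, hneg.le⟩
      have h := hfR _ (recCone_smul_mem hr hl)
      rw [map_smul, smul_eq_mul, div_mul_cancel₀ _ (ne_of_lt hneg)] at h
      linarith
    have hdec : ∀ p : E × E, f p = (inner ℝ p.1 ε : ℝ) * f (ε, 0) + (inner ℝ p.2 ε : ℝ) * f (0, ε) := by
      intro p
      have h1 : p = ((inner ℝ p.1 ε : ℝ)) • ((ε, (0 : E)) : E × E)
          + ((inner ℝ p.2 ε : ℝ)) • (((0 : E), ε) : E × E) := by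
        apply Prod.ext
        · show p.1 = (inner ℝ p.1 ε : ℝ) • ε + (inner ℝ p.2 ε : ℝ) • (0 : E)
          rw [smul_zero, add_zero, hsp p.1]
        · show p.2 = (inner ℝ p.1 ε : ℝ) • (0 : E) + (inner ℝ p.2 ε : ℝ) • ε
          rw [smul_zero, zero_add, hsp p.2]
      conv_lhs => rw [h1]
      rw [map_add, map_smul, map_smul, smul_eq_mul, smul_eq_mul]
    have hεε : (inner ℝ ε ε : ℝ) = 1 := by rw [real_inner_self_eq_norm_sq, hε]; norm_num
    have hfδ : ∀ δ1 δ2 : ℝ, 0 < δ1 → 0 < δ2 → δ1 * f (ε, 0) + δ2 * f (0, ε) < s := by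
      intro δ1 δ2 h1 h2
      have hmem : ((δ1 • ε, δ2 • ε) : E × E) ∈ Q1 := by
        constructor
        · show (0:ℝ) < inner ℝ (δ1 • ε) ε
          rw [real_inner_smul_left, hεε]; simpa using h1
        · show (0:ℝ) < inner ℝ (δ2 • ε) ε
          rw [real_inner_smul_left, hεε]; simpa using h2
      have h := hfQ _ hmem
      rw [hdec ((δ1 • ε, δ2 • ε) : E × E)] at h
      have e1 : (inner ℝ ((δ1 • ε, δ2 • ε) : E × E).1 ε : ℝ) = δ1 := by
        show (inner ℝ (δ1 • ε) ε : ℝ) = δ1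
        rw [real_inner_smul_left, hεε, mul_one]
      have e2 : (inner ℝ ((δ1 • ε, δ2 • ε) : E × E).2 ε : ℝ) = δ2 := by
        show (inner ℝ (δ2 • ε) ε : ℝ) = δ2
        rw [real_inner_smul_left, hεε, mul_one]
      rwa [e1, e2] at h
    set P := f ((ε, (0 : E)) : E × E) with hPdef
    set Q := f (((0 : E), ε) : E × E) with hQdef
    have hα : P ≤ 0 := by
      by_contra hP
      push_neg at hP
      rcases le_or_gt 0 Q with hQ0 | hQ0
      · have := hfδ 1 1 one_pos one_pos
        linarith
      · have hδ : 0 < P / (-2 * Q) := div_pos hP (by linarith)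
        have := hfδ 1 (P / (-2 * Q)) one_pos hδ
        have hv : P / (-2 * Q) * Q = -(P / 2) := by
          have hQne : Q ≠ 0 := ne_of_lt hQ0
          field_simp
        linarith
    have hβ : Q ≤ 0 := by
      by_contra hQ
      push_neg at hQ
      rcases le_or_gt 0 P with hP0 | hP0
      · have := hfδ 1 1 one_pos one_pos
        linarith
      · have hδ : 0 < Q / (-2 * P) := div_pos hQ (by linarith)
        have := hfδ (Q / (-2 * P)) 1 hδ one_pos
        have hv : Q / (-2 * P) * P = -(Q / 2) := by
          have hPne : P ≠ 0 := ne_of_lt hP0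
          field_simp
        linarith
    -- bound over K
    have hK'ne : K'.Nonempty := by
      have h0 := hu 0
      rw [hKeq] at h0
      obtain ⟨k, hk, r, hr, hkr⟩ := Set.mem_add.1 h0
      exact ⟨k, hk⟩
    obtain ⟨kmax, hkmaxK', hkmax⟩ :=
      hK'cpt.exists_isMaxOn hK'ne (f.continuous.neg.continuousOn)
    set cb := -(f kmax) with hcbdef
    have hKb : ∀ p ∈ K, -(f p) ≤ cb := by
      intro p hp
      rw [hKeq] at hp
      obtain ⟨k, hk, r, hr, hkr⟩ := Set.mem_add.1 hp
      have h1 : f p = f k + f r := by rw [← hkr, map_add]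
      have h2 := hfRnn r hr
      have h3 : -(f k) ≤ cb := hkmax hk
      linarith
    have hUb : ∀ n, (-P) * (inner ℝ (u n) ε : ℝ) + (-Q) * (inner ℝ (u (n+1)) ε : ℝ) ≤ cb := by
      intro n
      have h := hKb _ (hu n)
      rw [hdec ((u n, u (n+1)) : E × E)] at h
      have e1 : (inner ℝ ((u n, u (n+1)) : E × E).1 ε : ℝ) = (inner ℝ (u n) ε : ℝ) := rfl
      have e2 : (inner ℝ ((u n, u (n+1)) : E × E).2 ε : ℝ) = (inner ℝ (u (n+1)) ε : ℝ) := rfl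
      rw [e1, e2] at h
      linarith
    have hβpos : 0 < -Q := by
      rcases hβ.lt_or_eq with h | h
      · linarith
      · exfalso
        have hPpos : 0 < -P := by
          rcases hα.lt_or_eq with h' | h'
          · linarith
          · have h11 := hfδ 1 1 one_pos one_pos
            linarith
        obtain ⟨n, hn⟩ := hsup (cb / (-P))
        have h1 := hUb n
        rw [h, neg_zero, zero_mul, add_zero] at h1
        have h2 : cb < (-P) * (inner ℝ (u n) ε : ℝ) := by
          rw [mul_comm]
          exact (div_lt_iff₀ hPpos).1 hn
        linarith
    constructor
    · have h := hfRnn _ hγrec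
      rw [hdec (((0 : E), γ) : E × E)] at h
      have e1 : (inner ℝ (((0 : E), γ) : E × E).1 ε : ℝ) = 0 := by
        show (inner ℝ (0 : E) ε : ℝ) = 0
        exact inner_zero_left ε
      have e2 : (inner ℝ (((0 : E), γ) : E × E).2 ε : ℝ) = (inner ℝ γ ε : ℝ) := rfl
      rw [e1, e2, zero_mul, zero_add] at h
      -- h : 0 ≤ inner ℝ γ ε * Q, Q < 0
      nlinarith
    · by_contra hnd
      push_neg at hnd
      have hmono : Monotone (fun n => (inner ℝ (u n) ε : ℝ)) :=
        monotone_nat_of_le_succ fun n => (hnd n).le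
      set U0 := (inner ℝ (u 0) ε : ℝ) with hU0def
      set B := max U0 ((cb - (-P) * U0) / (-Q)) with hBdef
      obtain ⟨n, hn⟩ := hsup B
      have hall : ∀ m, (inner ℝ (u m) ε : ℝ) ≤ B := by
        intro m
        cases m with
        | zero => exact le_max_left _ _
        | succ k =>
          have h1 := hUb k
          have h2 : (-P) * U0 ≤ (-P) * (inner ℝ (u k) ε : ℝ) :=
            mul_le_mul_of_nonneg_left (hmono (Nat.zero_le k)) (by linarith)
          have h3 : (inner ℝ (u (k+1)) ε : ℝ) ≤ (cb - (-P) * U0) / (-Q) := by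
            rw [le_div_iff₀ hβpos]
            nlinarith
          exact h3.trans (le_max_right _ _)
      linarith [hall n]
  -- final assembly
  set g := (inner ℝ γ e₀ : ℝ) with hgdef
  have hγg : γ = g • e₀ := (hspan γ).symm
  have hspanneg : ∀ x : E, ((inner ℝ x (- e₀) : ℝ)) • (- e₀) = x := (hspan' (- e₀) (Or.inr rfl)).2
  have hεneg : ‖(- e₀ : E)‖ = 1 := by simpa using he₀
  rcases lt_trichotomy g 0 with hg | hg | hg
  · have hgneg : 0 < (inner ℝ γ (- e₀) : ℝ) := by
      rw [inner_neg_right]; rw [hgdef] at hg; linarith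
    have hsup := gpos_sup (- e₀) hεneg hspanneg hgneg
    rcases core (- e₀) hεneg hspanneg hsup with hc | ⟨hle, _⟩
    · exact caseCone (- e₀) hεneg hspanneg hgneg.le hc (upstep (- e₀) hsup)
    · linarith
  · have hγ0 : γ = 0 := by rw [hγg, hg, zero_smul]
    by_cases hb : ∀ B : ℝ, ∃ n, B < (inner ℝ (u n) e₀ : ℝ)
    · rcases core e₀ he₀ hspan hb with hc | ⟨_, hdown⟩
      · refine caseCone e₀ he₀ hspan ?_ hc (upstep e₀ hb)
        rw [← hgdef, hg]
      · exact caseFP (fploop (upstep e₀ hb) hdown) hγ0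
    · by_cases hb' : ∀ B : ℝ, ∃ n, B < (inner ℝ (u n) (- e₀) : ℝ)
      · rcases core (- e₀) hεneg hspanneg hb' with hc | ⟨_, hdown⟩
        · refine caseCone (- e₀) hεneg hspanneg ?_ hc (upstep (- e₀) hb')
          rw [inner_neg_right, ← hgdef, hg, neg_zero]
        · refine caseFP (fploop ?_ ?_) hγ0
          · obtain ⟨j, hj⟩ := hdown
            rw [inner_neg_right, inner_neg_right] at hj
            exact ⟨j, by linarith⟩
          · obtain ⟨m, hm⟩ := upstep (- e₀) hb'
            rw [inner_neg_right, inner_neg_right] at hm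
            exact ⟨m, by linarith⟩
      · push_neg at hb hb'
        obtain ⟨B, hB⟩ := hb
        obtain ⟨B', hB'⟩ := hb'
        have hB'' : ∀ n, -B' ≤ (inner ℝ (u n) e₀ : ℝ) := by
          intro n
          have := hB' n
          rw [inner_neg_right] at this
          linarith
        have hlimfp : ∀ L : ℝ, Tendsto (fun n => (inner ℝ (u n) e₀ : ℝ)) atTop (nhds L) →
            ∃ x : E, (x, x) ∈ K := by
          intro L hlim
          have hulim : Tendsto u atTop (nhds (L • e₀)) := by
            have h1 : Tendsto (fun n => (inner ℝ (u n) e₀ : ℝ) • e₀) atTop (nhds (L • e₀)) :=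
              hlim.smul_const e₀
            have h2 : (fun n => (inner ℝ (u n) e₀ : ℝ) • e₀) = u := funext fun n => hspan (u n)
            rwa [h2] at h1
          have hulim' : Tendsto (fun n => u (n + 1)) atTop (nhds (L • e₀)) :=
            hulim.comp (tendsto_add_atTop_nat 1)
          have hpair : Tendsto (fun n => ((u n, u (n + 1)) : E × E)) atTop
              (nhds ((L • e₀, L • e₀) : E × E)) := hulim.prodMk_nhds hulim'
          exact ⟨L • e₀, K_closed.mem_of_tendsto hpair (Filter.Eventually.of_forall hu)⟩
        by_cases hup : ∃ i, (inner ℝ (u i) e₀ : ℝ) ≤ (inner ℝ (u (i+1)) e₀ : ℝ)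
        · by_cases hdn : ∃ j, (inner ℝ (u (j+1)) e₀ : ℝ) ≤ (inner ℝ (u j) e₀ : ℝ)
          · exact caseFP (fploop hup hdn) hγ0
          · push_neg at hdn
            have hmono : Monotone (fun n => (inner ℝ (u n) e₀ : ℝ)) :=
              monotone_nat_of_le_succ fun n => (hdn n).le
            have hbdd : BddAbove (Set.range fun n => (inner ℝ (u n) e₀ : ℝ)) :=
              ⟨B, by rintro _ ⟨n, rfl⟩; exact hB n⟩
            exact caseFP (hlimfp _ (tendsto_atTop_ciSup hmono hbdd)) hγ0
        · push_neg at hup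
          have hanti : Antitone (fun n => (inner ℝ (u n) e₀ : ℝ)) :=
            antitone_nat_of_succ_le fun n => (hup n).le
          have hbdd : BddBelow (Set.range fun n => (inner ℝ (u n) e₀ : ℝ)) :=
            ⟨-B', by rintro _ ⟨n, rfl⟩; exact hB'' n⟩
          exact caseFP (hlimfp _ (tendsto_atTop_ciInf hanti hbdd)) hγ0
  · have hsup := gpos_sup e₀ he₀ hspan (by rw [← hgdef]; exact hg)
    rcases core e₀ he₀ hspan hsup with hc | ⟨hle, _⟩
    · exact caseCone e₀ he₀ hspan (by rw [← hgdef]; exact hg.le) hc (upstep e₀ hsup)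
    · rw [← hgdef] at hle; linarith
end

section
/- Let E be a finite-dimensional real normed vector space and let K ⊆ E × E be a closed convex set. Let Δ_E = {(x, x) : x ∈ E} ⊆ E × E be the diagonal. Then K ∩ Δ_E ≠ ∅ if and only if there exists a bounded sequence (u_n)_{n∈ℕ} in E such that (u_n, u_{n+1}) ∈ K for all n ∈ ℕ. -/
open Filter Finset Topology

theorem fixed_point_iff_bounded_sequence
    {E : Type*} [NormedAddCommGroup E] [NormedSpace ℝ E] [FiniteDimensional ℝ E]
    (K : Set (E × E)) (hclosed : IsClosed K) (hconv : Convex ℝ K) :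
    (K ∩ {p : E × E | p.1 = p.2}).Nonempty ↔
      ∃ u : ℕ → E, (∃ M : ℝ, ∀ n : ℕ, ‖u n‖ ≤ M) ∧ ∀ n : ℕ, (u n, u (n + 1)) ∈ K := by
  constructor
  · rintro ⟨⟨x, y⟩, hK, hxy⟩
    simp only [Set.mem_setOf_eq] at hxy
    subst hxy
    exact ⟨fun _ => x, ⟨‖x‖, fun _ => le_rfl⟩, fun _ => hK⟩
  · rintro ⟨u, ⟨M, hM⟩, hu⟩
    have hM0 : 0 ≤ M := le_trans (norm_nonneg _) (hM 0)
    set a : ℕ → E := fun N => ((N : ℝ) + 1)⁻¹ • ∑ n ∈ range (N + 1), u n with ha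
    set b : ℕ → E := fun N => ((N : ℝ) + 1)⁻¹ • ∑ n ∈ range (N + 1), u (n + 1) with hb
    have hNpos : ∀ N : ℕ, (0:ℝ) < (N:ℝ) + 1 := fun N => by positivity
    have habK : ∀ N, (a N, b N) ∈ K := by
      intro N
      have h := hconv.sum_mem (t := range (N+1)) (w := fun _ => ((N:ℝ)+1)⁻¹)
        (z := fun n => (u n, u (n+1)))
        (fun i _ => by positivity)
        (by simp [Finset.sum_const, Finset.card_range, mul_inv_cancel₀ (hNpos N).ne'])
        (fun i _ => hu i)
      have key : ∑ n ∈ range (N+1), (((N:ℝ)+1)⁻¹ : ℝ) • (u n, u (n+1)) = (a N, b N) := by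
        rw [← Finset.smul_sum]
        refine Prod.ext ?_ ?_ <;>
          simp [ha, hb, Prod.fst_sum, Prod.snd_sum]
      rwa [key] at h
    have haM : ∀ N, a N ∈ Metric.closedBall (0:E) M := by
      intro N
      simp only [Metric.mem_closedBall, dist_zero_right]
      have h1 : ‖a N‖ ≤ ((N:ℝ)+1)⁻¹ * ∑ n ∈ range (N+1), ‖u n‖ := by
        rw [ha]
        simp only
        rw [norm_smul, norm_inv, Real.norm_eq_abs, abs_of_pos (hNpos N)]
        gcongr
        exact norm_sum_le _ _
      have h2 : ∑ n ∈ range (N+1), ‖u n‖ ≤ (N+1 : ℝ) * M := by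
        calc ∑ n ∈ range (N+1), ‖u n‖ ≤ ∑ n ∈ range (N+1), M :=
              Finset.sum_le_sum fun i _ => hM i
          _ = (N+1 : ℝ) * M := by
              rw [Finset.sum_const, Finset.card_range, nsmul_eq_mul]
              push_cast; ring
      calc ‖a N‖ ≤ ((N:ℝ)+1)⁻¹ * ((N+1:ℝ) * M) :=
            h1.trans (mul_le_mul_of_nonneg_left h2 (inv_nonneg.mpr (hNpos N).le))
        _ = M := by field_simp
    obtain ⟨x, -, φ, hφ, hx⟩ := tendsto_subseq_of_bounded Metric.isBounded_closedBall haM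
    have hdiff : ∀ N, b N - a N = ((N:ℝ)+1)⁻¹ • (u (N+1) - u 0) := by
      intro N
      rw [ha, hb]
      simp only
      rw [← smul_sub, ← Finset.sum_sub_distrib]
      congr 1
      have := Finset.sum_range_sub (f := u) (n := N+1)
      simpa using this
    have hdiff0 : Tendsto (fun k => b (φ k) - a (φ k)) atTop (𝓝 0) := by
      have hten : Tendsto (fun k : ℕ => ((k:ℝ)+1)⁻¹ * (2*M)) atTop (𝓝 0) := by
        have h1 : Tendsto (fun k : ℕ => ((k:ℝ)+1)⁻¹) atTop (𝓝 0) :=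
          tendsto_one_div_add_atTop_nhds_zero_nat.congr (fun k => by rw [one_div])
        simpa using h1.mul_const (2*M)
      refine squeeze_zero_norm ?_ hten
      intro k
      rw [hdiff, norm_smul, norm_inv, Real.norm_eq_abs, abs_of_pos (hNpos (φ k))]
      have hb1 : ‖u (φ k + 1) - u 0‖ ≤ 2 * M := by
        calc ‖u (φ k + 1) - u 0‖ ≤ ‖u (φ k + 1)‖ + ‖u 0‖ := norm_sub_le _ _
          _ ≤ M + M := add_le_add (hM _) (hM _)
          _ = 2 * M := by ring
      have hinv : ((φ k : ℝ)+1)⁻¹ ≤ ((k:ℝ)+1)⁻¹ := by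
        apply inv_anti₀ (hNpos k)
        have := hφ.le_apply (x := k)
        exact_mod_cast Nat.succ_le_succ this
      exact mul_le_mul hinv hb1 (norm_nonneg _) (inv_nonneg.mpr (hNpos k).le)
    have hbx : Tendsto (fun k => b (φ k)) atTop (𝓝 x) := by
      have : (fun k => b (φ k)) = fun k => (a (φ k)) + (b (φ k) - a (φ k)) := by
        funext k; abel
      rw [this]
      simpa using (hx.add hdiff0)
    refine ⟨(x, x), ?_, rfl⟩
    exact hclosed.mem_of_tendsto (hx.prodMk_nhds hbx)
      (Eventually.of_forall fun k => habK (φ k))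
end

section
/- Let K ⊆ ℝ^d be a nonempty MW-convex set and let π : ℝ^d → ℝ^d be a linear projection (a linear map with π ∘ π = π). Then rec(π(K)) ⊆ π(rec(K)). -/
open Pointwise

/-- The key statement: if `A` is a nonempty compact set, `D` is a convex cone, and
`z + (A + D) ⊆ A + D` (elementwise), then `z ∈ D`. -/
def KeyStmt (n : ℕ) : Prop :=
  ∀ (E : Type) [NormedAddCommGroup E] [InnerProductSpace ℝ E] [FiniteDimensional ℝ E],
  ∀ (A D : Set E) (z : E), Module.finrank ℝ E ≤ n → A.Nonempty → IsCompact A →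
    Convex ℝ D → (0 : E) ∈ D → (∀ c : ℝ, 0 ≤ c → ∀ x ∈ D, c • x ∈ D) →
    (∀ a ∈ A, ∀ e ∈ D, ∃ a' ∈ A, ∃ e' ∈ D, z + (a + e) = a' + e') → z ∈ D

/-- Projection step: reduce the key statement to a proper subspace containing `D` and `z`. -/
lemma key_project (n : ℕ) (ih : KeyStmt n)
    {E : Type} [NormedAddCommGroup E] [InnerProductSpace ℝ E] [FiniteDimensional ℝ E]
    {A D : Set E} {z : E} (W : Submodule ℝ E) (hWrank : Module.finrank ℝ ↥W ≤ n)
    (hDW : D ⊆ (W : Set E)) (hzW : z ∈ W)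
    (hAne : A.Nonempty) (hAcpt : IsCompact A) (hDconv : Convex ℝ D)
    (hD0 : (0 : E) ∈ D) (hDsmul : ∀ c : ℝ, 0 ≤ c → ∀ x ∈ D, c • x ∈ D)
    (hprop : ∀ a ∈ A, ∀ e ∈ D, ∃ a' ∈ A, ∃ e' ∈ D, z + (a + e) = a' + e') : z ∈ D := by
  set P : E →L[ℝ] ↥W := W.orthogonalProjectionOnto with hP
  set A' : Set ↥W := P '' A with hA'
  set D' : Set ↥W := Subtype.val ⁻¹' D with hD'
  have hself : ∀ x : ↥W, P (↑x) = x := fun x => Submodule.orthogonalProjectionOnto_mem_subspace_eq_self x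
  have hz' : (⟨z, hzW⟩ : ↥W) ∈ D' := by
    refine ih ↥W A' D' ⟨z, hzW⟩ hWrank (hAne.image _) (hAcpt.image P.continuous)
      ?_ ?_ ?_ ?_
    · intro x hx y hy a b ha hb hab
      have : (↑(a • x + b • y) : E) ∈ D := by
        push_cast
        exact hDconv hx hy ha hb hab
      exact this
    · show ((0 : ↥W) : E) ∈ D
      simpa using hD0
    · intro c hc x hx
      show ((c • x : ↥W) : E) ∈ D
      push_cast
      exact hDsmul c hc _ hx
    · rintro a' ⟨a, ha, rfl⟩ e' he'
      obtain ⟨a₁, ha₁, e₁, he₁, heq⟩ := hprop a ha (↑e') he'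
      refine ⟨P a₁, ⟨a₁, ha₁, rfl⟩, ⟨e₁, hDW he₁⟩, he₁, ?_⟩
      have := congrArg P heq
      simpa [map_add, hself ⟨z, hzW⟩, hself e', hself ⟨e₁, hDW he₁⟩] using this
  exact hz'

lemma key (n : ℕ) : KeyStmt n := by
  induction n with
  | zero =>
    intro E _ _ _ A D z hrank _ _ _ hD0 _ _
    have : Module.finrank ℝ E = 0 := Nat.le_zero.mp hrank
    have : Subsingleton E := Module.finrank_zero_iff.mp this
    rwa [Subsingleton.elim z 0]
  | succ n ih =>
    intro E _ _ _ A D z hrank hAne hAcpt hDconv hD0 hDsmul hprop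
    -- iterate the shift property
    have hseq : ∀ a₀ ∈ A, ∀ k : ℕ, ∃ a ∈ A, ∃ e ∈ D, a₀ + (k : ℝ) • z = a + e := by
      intro a₀ ha₀ k
      induction k with
      | zero => exact ⟨a₀, ha₀, 0, hD0, by simp⟩
      | succ k ihk =>
        obtain ⟨a, ha, e, he, heq⟩ := ihk
        obtain ⟨a', ha', e', he', heq'⟩ := hprop a ha e he
        refine ⟨a', ha', e', he', ?_⟩
        calc a₀ + ((k + 1 : ℕ) : ℝ) • z = z + (a₀ + (k : ℝ) • z) := by
              push_cast
              rw [add_smul, one_smul]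
              abel
          _ = z + (a + e) := by rw [heq]
          _ = a' + e' := heq'
    -- z is in the closure of D
    obtain ⟨a₀, ha₀⟩ := hAne
    obtain ⟨M, hM⟩ := hAcpt.isBounded.exists_norm_le
    have hM0 : 0 ≤ M := le_trans (norm_nonneg a₀) (hM a₀ ha₀)
    have hzcl : z ∈ closure D := by
      rw [Metric.mem_closure_iff]
      intro ε hε
      obtain ⟨k, hk⟩ := exists_nat_gt (2 * M / ε)
      have hkpos : (0 : ℝ) < k := lt_of_le_of_lt (div_nonneg (by linarith) hε.le) hk
      have hk0 : (k : ℝ) ≠ 0 := ne_of_gt hkpos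
      obtain ⟨a, ha, e, he, heq⟩ := hseq a₀ ha₀ k
      refine ⟨(k : ℝ)⁻¹ • e, hDsmul _ (inv_nonneg.mpr (Nat.cast_nonneg k)) e he, ?_⟩
      have h2 : (k : ℝ) • z - e = a - a₀ := by
        rw [sub_eq_sub_iff_add_eq_add, add_comm]
        exact heq
      have h3 : z - (k : ℝ)⁻¹ • e = (k : ℝ)⁻¹ • (a - a₀) := by
        rw [← h2, smul_sub, smul_smul, inv_mul_cancel₀ hk0, one_smul]
      rw [dist_eq_norm, h3, norm_smul, norm_inv, Real.norm_natCast]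
      have hbound : ‖a - a₀‖ ≤ 2 * M := by
        calc ‖a - a₀‖ ≤ ‖a‖ + ‖a₀‖ := norm_sub_le _ _
          _ ≤ 2 * M := by linarith [hM a ha, hM a₀ ha₀]
      calc (k : ℝ)⁻¹ * ‖a - a₀‖ ≤ (k : ℝ)⁻¹ * (2 * M) := by
            apply mul_le_mul_of_nonneg_left hbound (by positivity)
        _ < ε := by
            rw [inv_mul_lt_iff₀ hkpos]
            rw [div_lt_iff₀ hε] at hk
            linarith
    by_cases hzD : z ∈ D
    · exact hzD
    by_cases hspan : Submodule.span ℝ D = ⊤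
    · -- D spans: use Hahn-Banach separation and slice off a face
      have haff : affineSpan ℝ D = ⊤ := by
        rw [AffineSubspace.affineSpan_eq_top_iff_vectorSpan_eq_top_of_nonempty ℝ E E ⟨0, hD0⟩]
        rw [vectorSpan_eq_span_vsub_set_right ℝ hD0,
          show (· -ᵥ (0 : E)) '' D = D by ext x; simp [vsub_eq_sub]]
        exact hspan
      obtain ⟨w, hw⟩ := hDconv.interior_nonempty_iff_affineSpan_eq_top.mpr haff
      have hzint : z ∉ interior D := fun h => hzD (interior_subset h)
      obtain ⟨f, hf⟩ := geometric_hahn_banach_open_point hDconv.interior isOpen_interior hzint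
      have hfw : f w < f z := hf w hw
      -- f ≤ f z on D
      have hfD : ∀ e ∈ D, f e ≤ f z := by
        intro e he
        by_contra h
        push_neg at h
        have hde : 0 < f e - f w := by linarith
        set t : ℝ := (f z - f w) / (f e - f w) with ht
        have ht0 : 0 ≤ t := div_nonneg (by linarith) hde.le
        have ht1 : t < 1 := by
          rw [div_lt_one hde]
          linarith
        have hcombo : (1 - t) • w + t • e ∈ interior D :=
          hDconv.combo_interior_closure_mem_interior hw (subset_closure he)
            (by linarith) ht0 (by ring)
        have hlt := hf _ hcombo
        have hval : f ((1 - t) • w + t • e) = f z := by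
          have htmul : t * (f e - f w) = f z - f w := by
            rw [ht, div_mul_cancel₀ _ (ne_of_gt hde)]
          simp only [map_add, map_smul, smul_eq_mul]
          nlinarith [htmul]
        rw [hval] at hlt
        exact lt_irrefl _ hlt
      have hfz_nonneg : 0 ≤ f z := by simpa using hfD 0 hD0
      -- maximum of f on A
      obtain ⟨amax, hamaxA, hmax⟩ := hAcpt.exists_isMaxOn ⟨a₀, ha₀⟩ f.continuous.continuousOn
      have hmax' : ∀ x ∈ A, f x ≤ f amax := fun x hx => hmax hx
      -- f z ≤ 0, using the iterated shift from amax
      have hfz_nonpos : f z ≤ 0 := by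
        obtain ⟨a, ha, e, he, heq⟩ := hseq amax hamaxA 2
        have := congrArg f heq
        simp only [map_add, map_smul, smul_eq_mul] at this
        have h1 : f a ≤ f amax := hmax' a ha
        have h2 : f e ≤ f z := hfD e he
        push_cast at this
        linarith
      have hfz : f z = 0 := le_antisymm hfz_nonpos hfz_nonneg
      have hfw0 : f w < 0 := by rwa [hfz] at hfw
      -- the face sets
      set Af : Set E := A ∩ {x | f x = f amax} with hAf
      set Df : Set E := D ∩ {x | f x = 0} with hDf
      have hAfne : Af.Nonempty := ⟨amax, hamaxA, rfl⟩
      have hAfcpt : IsCompact Af :=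
        hAcpt.inter_right (isClosed_eq f.continuous continuous_const)
      have hDfconv : Convex ℝ Df := by
        intro x hx y hy a b ha hb hab
        refine ⟨hDconv hx.1 hy.1 ha hb hab, ?_⟩
        show f (a • x + b • y) = 0
        have h1 : f x = 0 := hx.2
        have h2 : f y = 0 := hy.2
        simp only [map_add, map_smul, smul_eq_mul, h1, h2]
        ring
      have hDf0 : (0 : E) ∈ Df := ⟨hD0, by simp⟩
      have hDfsmul : ∀ c : ℝ, 0 ≤ c → ∀ x ∈ Df, c • x ∈ Df := by
        intro c hc x hx
        refine ⟨hDsmul c hc x hx.1, ?_⟩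
        show f (c • x) = 0
        rw [map_smul, smul_eq_mul, hx.2]
        ring
      have hpropf : ∀ a ∈ Af, ∀ e ∈ Df, ∃ a' ∈ Af, ∃ e' ∈ Df, z + (a + e) = a' + e' := by
        rintro a ⟨haA, hafa⟩ e ⟨heD, hefe⟩
        obtain ⟨a', ha', e', he', heq⟩ := hprop a haA e heD
        have := congrArg f heq
        simp only [map_add] at this
        have h1 : f a' ≤ f amax := hmax' a' ha'
        have h2 : f e' ≤ 0 := by
          have := hfD e' he'
          rwa [hfz] at this
        have hfa : f a = f amax := hafa
        have hfe : f e = 0 := hefe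
        have ha'eq : f a' = f amax := by linarith [hfz, hfa, hfe]
        have he'eq : f e' = 0 := by linarith [hfz, hfa, hfe]
        exact ⟨a', ⟨ha', ha'eq⟩, e', ⟨he', he'eq⟩, heq⟩
      -- project onto ker f
      set W : Submodule ℝ E := LinearMap.ker (f : E →ₗ[ℝ] ℝ) with hW
      have hWne : W ≠ ⊤ := by
        intro h
        have : w ∈ W := h ▸ Submodule.mem_top
        have : f w = 0 := this
        linarith
      have hWrank : Module.finrank ℝ ↥W ≤ n := by
        have := Submodule.finrank_lt (K := ℝ) (V := E) hWne
        omega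
      have hDfW : Df ⊆ (W : Set E) := fun x hx => LinearMap.mem_ker.mpr hx.2
      have hzWmem : z ∈ W := LinearMap.mem_ker.mpr hfz
      have : z ∈ Df :=
        key_project n ih W hWrank hDfW hzWmem hAfne hAfcpt hDfconv hDf0 hDfsmul hpropf
      exact this.1
    · -- D does not span: project onto the span
      set W : Submodule ℝ E := Submodule.span ℝ D with hW
      have hDW : D ⊆ (W : Set E) := Submodule.subset_span
      have hzWmem : z ∈ W := by
        have hcl : IsClosed (W : Set E) := W.closed_of_finiteDimensional
        have : closure D ⊆ (W : Set E) := by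
          rw [← hcl.closure_eq]
          exact closure_mono hDW
        exact this hzcl
      have hWrank : Module.finrank ℝ ↥W ≤ n := by
        have := Submodule.finrank_lt (K := ℝ) (V := E) hspan
        omega
      exact key_project n ih W hWrank hDW hzWmem ⟨a₀, ha₀⟩ hAcpt hDconv hD0 hDsmul hprop

theorem recCone_image_subset_image_recCone
    {d : ℕ} (K : Set (EuclideanSpace ℝ (Fin d))) (hne : K.Nonempty) (hK : IsMWConvex K)
    (π : EuclideanSpace ℝ (Fin d) →ₗ[ℝ] EuclideanSpace ℝ (Fin d))
    (hproj : ∀ x, π (π x) = π x) :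
    recCone (π '' K) ⊆ π '' recCone K := by
  obtain ⟨hcl, hconv, K', hK'cpt, hK'conv, hKsum⟩ := hK
  intro z hz
  set C : Set (EuclideanSpace ℝ (Fin d)) := recCone K with hC
  have hπcont : Continuous π := π.continuous_of_finiteDimensional
  -- C is a convex cone containing 0
  have hC0 : (0 : EuclideanSpace ℝ (Fin d)) ∈ C := by
    intro w hw l hl
    simpa using hw
  have hCconv : Convex ℝ C := by
    intro x hx y hy a b ha hb hab w hw l hl
    have : w + l • (a • x + b • y) = a • (w + l • x) + b • (w + l • y) := by
      have h1 : (1 : ℝ) • w = (a + b) • w := by rw [hab]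
      rw [smul_add, smul_add, smul_add, smul_comm l a x, smul_comm l b y]
      rw [show a • w + a • (l • x) + (b • w + b • (l • y))
            = (a + b) • w + (a • (l • x) + b • (l • y)) by rw [add_smul]; abel]
      rw [hab, one_smul]
    rw [this]
    exact hconv (hx w hw l hl) (hy w hw l hl) ha hb hab
  have hCsmul : ∀ c : ℝ, 0 ≤ c → ∀ x ∈ C, c • x ∈ C := by
    intro c hc x hx w hw l hl
    rw [smul_smul]
    exact hx w hw (l * c) (mul_nonneg hl hc)
  -- K' is nonempty
  have hK'ne : K'.Nonempty := by
    obtain ⟨x, hx⟩ := hne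
    rw [hKsum] at hx
    obtain ⟨k', hk', c, hc, rfl⟩ := hx
    exact ⟨k', hk'⟩
  set A : Set (EuclideanSpace ℝ (Fin d)) := π '' K' with hA
  set D : Set (EuclideanSpace ℝ (Fin d)) := π '' C with hD
  have hprop : ∀ a ∈ A, ∀ e ∈ D, ∃ a' ∈ A, ∃ e' ∈ D, z + (a + e) = a' + e' := by
    rintro a ⟨k', hk', rfl⟩ e ⟨c, hc, rfl⟩
    have hmem : k' + c ∈ K := by
      rw [hKsum]
      exact Set.add_mem_add hk' hc
    have hπmem : π (k' + c) ∈ π '' K := ⟨k' + c, hmem, rfl⟩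
    have := hz (π (k' + c)) hπmem 1 zero_le_one
    rw [one_smul] at this
    obtain ⟨x', hx', heq⟩ := this
    rw [hKsum] at hx'
    obtain ⟨k'', hk'', c'', hc'', rfl⟩ := hx'
    refine ⟨π k'', ⟨k'', hk'', rfl⟩, π c'', ⟨c'', hc'', rfl⟩, ?_⟩
    rw [map_add] at heq
    rw [heq, map_add]
    abel
  exact key (Module.finrank ℝ (EuclideanSpace ℝ (Fin d))) (EuclideanSpace ℝ (Fin d)) A D z le_rfl (hK'ne.image π)
    (hK'cpt.image hπcont) (hCconv.linear_image π) ⟨0, hC0, map_zero π⟩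
    (by rintro c hc x ⟨y, hy, rfl⟩; exact ⟨c • y, hCsmul c hc y hy, map_smul π c y⟩)
    hprop
end

section
/- Let K ⊆ ℝ^d be a nonempty MW-convex set and let π : ℝ^d → ℝ^d be a linear projection (a linear map with π ∘ π = π). Then rec(π(K)) = π(rec(K)). -/
open Pointwise

open RealInnerProductSpace Filter Topology

section Aux

variable {E : Type*} [NormedAddCommGroup E] [InnerProductSpace ℝ E]

private lemma coneAdd {G : Set E} (hconv : Convex ℝ G)
    (hsmul : ∀ t : ℝ, 0 ≤ t → ∀ g ∈ G, t • g ∈ G) :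
    ∀ x ∈ G, ∀ y ∈ G, x + y ∈ G := by
  intro x hx y hy
  have h : (1/2 : ℝ) • x + (1/2 : ℝ) • y ∈ G :=
    hconv hx hy (by norm_num) (by norm_num) (by norm_num)
  have h2 := hsmul 2 (by norm_num) _ h
  have hxy : (2:ℝ) • ((1/2:ℝ) • x + (1/2:ℝ) • y) = x + y := by
    rw [smul_add, smul_smul, smul_smul]; norm_num
  rwa [hxy] at h2

private lemma coneSum {G : Set E} (h0 : (0:E) ∈ G) (hconv : Convex ℝ G)
    (hsmul : ∀ t : ℝ, 0 ≤ t → ∀ g ∈ G, t • g ∈ G)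
    {ι : Type*} (s : Finset ι) (a : ι → ℝ) (v : ι → E)
    (ha : ∀ i ∈ s, 0 ≤ a i) (hv : ∀ i ∈ s, v i ∈ G) :
    ∑ i ∈ s, a i • v i ∈ G := by
  classical
  induction s using Finset.induction_on with
  | empty => simpa using h0
  | @insert j s hj ih =>
    rw [Finset.sum_insert hj]
    exact coneAdd hconv hsmul _
      (hsmul _ (ha j (Finset.mem_insert_self j s)) _ (hv j (Finset.mem_insert_self j s))) _
      (ih (fun i hi => ha i (Finset.mem_insert_of_mem hi))
          (fun i hi => hv i (Finset.mem_insert_of_mem hi)))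

end Aux

section SupportTop

variable {W : Type*} [NormedAddCommGroup W] [InnerProductSpace ℝ W] [FiniteDimensional ℝ W]

private lemma support_top (H : Set W) (h0 : (0:W) ∈ H) (hconv : Convex ℝ H)
    (hsmul : ∀ t : ℝ, 0 ≤ t → ∀ g ∈ H, t • g ∈ H)
    (hspan : Submodule.span ℝ H = ⊤) {z : W} (hzc : z ∈ closure H) (hz : z ∉ H) :
    ∃ u : W, u ≠ 0 ∧ (∀ g ∈ H, ⟪u, g⟫ ≤ 0) ∧ ⟪u, z⟫ = 0 := by
  classical
  -- Step 1: an interior point of H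
  obtain ⟨t, htH, htspan, htli⟩ := exists_linearIndependent ℝ H
  have htfin : t.Finite := htli.setFinite
  haveI : Fintype t := htfin.fintype
  have htop : ⊤ ≤ Submodule.span ℝ (Set.range ((↑) : t → W)) := by
    rw [Subtype.range_coe, htspan, hspan]
  let b : Module.Basis t ℝ W := Module.Basis.mk htli htop
  set x₀ : W := ∑ i : t, (1:ℝ) • (i : W) with hx₀def
  have hx₀H : x₀ ∈ H :=
    coneSum h0 hconv hsmul Finset.univ _ _ (fun _ _ => zero_le_one) (fun i _ => htH i.2)
  set L := b.equivFunL.toContinuousLinearMap with hLdef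
  set M : ℝ := ‖L‖ with hMdef
  have hM : 0 ≤ M := norm_nonneg _
  have hcoord : ∀ v : W, ∀ i : t, |b.equivFun v i| ≤ M * ‖v‖ := by
    intro v i
    have h1 : ‖b.equivFun v i‖ ≤ ‖b.equivFun v‖ := norm_le_pi_norm _ i
    have h2 : ‖L v‖ ≤ M * ‖v‖ := L.le_opNorm v
    have h3 : L v = b.equivFun v := rfl
    rw [h3] at h2
    calc |b.equivFun v i| = ‖b.equivFun v i‖ := (Real.norm_eq_abs _).symm
      _ ≤ ‖b.equivFun v‖ := h1
      _ ≤ M * ‖v‖ := h2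
  set ε₀ : ℝ := (M+1)⁻¹ with hε₀def
  have hε₀ : 0 < ε₀ := by positivity
  have hball : ∀ v : W, ‖v‖ < ε₀ → x₀ + v ∈ H := by
    intro v hv
    have habs : ∀ i : t, |b.equivFun v i| ≤ M * ‖v‖ := hcoord v
    set cf : t → ℝ := b.equivFun v with hcfdef
    have hrepr : ∑ i : t, cf i • b i = v := b.sum_equivFun v
    have hbi : ∀ i : t, b i = (i : W) := fun i => by simp [b]
    have hsum : x₀ + v = ∑ i : t, ((1:ℝ) + cf i) • (i : W) := by
      rw [hx₀def]
      conv_lhs => rw [← hrepr]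
      rw [← Finset.sum_add_distrib]
      refine Finset.sum_congr rfl (fun i _ => ?_)
      rw [hbi, add_smul]
    rw [hsum]
    have h1 : M * ‖v‖ < 1 := by
      have hle : M * ‖v‖ ≤ M * ε₀ := mul_le_mul_of_nonneg_left (le_of_lt hv) hM
      have hq : M / (M + 1) < 1 := (div_lt_one (by positivity)).mpr (by linarith)
      have hlt : M * ε₀ < 1 := by
        rw [hε₀def, ← div_eq_mul_inv]; exact hq
      linarith
    refine coneSum h0 hconv hsmul _ _ _ (fun i _ => ?_) (fun i _ => htH i.2)
    have h2 := abs_le.mp (habs i)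
    linarith [h2.1]
  have hx₀int : x₀ ∈ interior H := by
    rw [mem_interior]
    refine ⟨Metric.ball x₀ ε₀, fun y hy => ?_, Metric.isOpen_ball, Metric.mem_ball_self hε₀⟩
    have hyn : ‖y - x₀‖ < ε₀ := by rwa [Metric.mem_ball, dist_eq_norm] at hy
    have := hball (y - x₀) hyn
    simpa using this
  -- Step 2: z is not in the interior of the closure
  have hznotint : z ∉ interior (closure H) := by
    intro hzint
    rcases Metric.isOpen_iff.mp isOpen_interior z hzint with ⟨δ, hδ, hballs⟩
    by_cases hzx : z = x₀
    · exact hz (hzx ▸ hx₀H)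
    have hzx0 : 0 < ‖z - x₀‖ := by
      rw [norm_pos_iff, sub_ne_zero]; exact hzx
    set c : ℝ := δ / (2 * ‖z - x₀‖) with hcdef
    have hc : 0 < c := by positivity
    set y : W := z + c • (z - x₀) with hydef
    have hy : y ∈ closure H := by
      have hyb : y ∈ Metric.ball z δ := by
        rw [Metric.mem_ball, dist_eq_norm, hydef, add_sub_cancel_left, norm_smul,
          Real.norm_eq_abs, abs_of_pos hc, hcdef]
        have h2 : δ / (2 * ‖z - x₀‖) * ‖z - x₀‖ = δ / 2 := by
          field_simp
        rw [h2]
        linarith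
      exact interior_subset (hballs hyb)
    have hzseg : z ∈ openSegment ℝ x₀ y := by
      have h1c : (0:ℝ) < 1 + c := by linarith
      have h1c : (0:ℝ) < 1 + c := by linarith
      refine ⟨c/(1+c), 1/(1+c), by positivity, by positivity, ?_, ?_⟩
      · rw [← add_div, add_comm c 1, div_self (ne_of_gt h1c)]
      · rw [hydef]
        match_scalars <;> field_simp <;> ring
    have hzint2 := hconv.openSegment_interior_closure_subset_interior hx₀int hy hzseg
    exact hz (interior_subset hzint2)
  -- Step 3: approximate z from outside the closure
  have hzfr : z ∈ closure ((closure H)ᶜ) := by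
    have h1 : z ∈ frontier (closure H) := ⟨by rwa [closure_closure], hznotint⟩
    rw [frontier_eq_closure_inter_closure] at h1
    exact h1.2
  obtain ⟨y, hyH, hylim⟩ := mem_closure_iff_seq_limit.mp hzfr
  -- Step 4: projections
  set D := closure H with hDdef
  have hDconv : Convex ℝ D := hconv.closure
  have hDne : D.Nonempty := ⟨z, hzc⟩
  have hproj : ∀ n : ℕ, ∃ p ∈ D, ‖y n - p‖ = ⨅ w : D, ‖y n - w‖ := fun n =>
    exists_norm_eq_iInf_of_complete_convex hDne isClosed_closure.isComplete hDconv (y n)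
  choose P hPD hPinf using hproj
  have hPchar : ∀ n, ∀ w ∈ D, ⟪y n - P n, w - P n⟫ ≤ 0 := fun n =>
    (norm_eq_iInf_iff_real_inner_le_zero hDconv (hPD n)).mp (hPinf n)
  have hPle : ∀ n, ‖y n - P n‖ ≤ ‖y n - z‖ := by
    intro n
    rw [hPinf n]
    exact ciInf_le ⟨0, by rintro _ ⟨w, rfl⟩; exact norm_nonneg _⟩ (⟨z, hzc⟩ : D)
  have hyz : Tendsto (fun n => ‖y n - z‖) atTop (𝓝 0) := by
    have := hylim
    rw [tendsto_iff_norm_sub_tendsto_zero] at this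
    exact this
  have hPz : Tendsto P atTop (𝓝 z) := by
    rw [tendsto_iff_dist_tendsto_zero]
    refine squeeze_zero (fun n => dist_nonneg) (fun n => ?_) (by simpa using hyz.const_mul 2)
    calc dist (P n) z = ‖P n - z‖ := dist_eq_norm _ _
      _ ≤ ‖P n - y n‖ + ‖y n - z‖ := by
          have := norm_add_le (P n - y n) (y n - z)
          simpa using this
      _ ≤ ‖y n - z‖ + ‖y n - z‖ := by
          have h := hPle n
          rw [norm_sub_rev (P n) (y n)]
          linarith
      _ = 2 * ‖y n - z‖ := by ring
  have hne0 : ∀ n, y n - P n ≠ 0 := by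
    intro n h
    have : y n = P n := by rwa [sub_eq_zero] at h
    exact hyH n (this ▸ hPD n)
  set u' : ℕ → W := fun n => ‖y n - P n‖⁻¹ • (y n - P n) with hu'def
  have hu'sph : ∀ n, u' n ∈ Metric.sphere (0:W) 1 := by
    intro n
    rw [Metric.mem_sphere, dist_zero_right, hu'def]
    rw [norm_smul, Real.norm_eq_abs, abs_of_nonneg (by positivity)]
    rw [inv_mul_cancel₀ (norm_ne_zero_iff.mpr (hne0 n))]
  obtain ⟨u, husph, φ, hφ, hulim⟩ := (isCompact_sphere (0:W) 1).tendsto_subseq hu'sph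
  have hu0 : u ≠ 0 := by
    intro h
    have h1 : ‖u‖ = 1 := by
      rw [Metric.mem_sphere, dist_zero_right] at husph; exact husph
    rw [h] at h1; simp at h1
  have hsupport : ∀ w ∈ H, ⟪u, w - z⟫ ≤ 0 := by
    intro w hw
    have hterm : ∀ k, ⟪u' (φ k), w - P (φ k)⟫ ≤ 0 := by
      intro k
      have h1 := hPchar (φ k) w (subset_closure hw)
      rw [hu'def]
      rw [real_inner_smul_left]
      exact mul_nonpos_of_nonneg_of_nonpos (by positivity) h1
    have hlim2 : Tendsto (fun k => ⟪u' (φ k), w - P (φ k)⟫) atTop (𝓝 ⟪u, w - z⟫) :=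
      hulim.inner (tendsto_const_nhds.sub (hPz.comp hφ.tendsto_atTop))
    exact le_of_tendsto hlim2 (Eventually.of_forall hterm)
  have h0z : 0 ≤ ⟪u, z⟫ := by
    have := hsupport 0 h0
    rw [inner_sub_right, inner_zero_right] at this
    linarith
  have hneg : ∀ g ∈ H, ⟪u, g⟫ ≤ 0 := by
    intro g hg
    by_contra hpos
    push_neg at hpos
    set c : ℝ := (⟪u, z⟫ + 1) / ⟪u, g⟫ with hcdef
    have hc : 0 ≤ c := le_of_lt (div_pos (by linarith) hpos)
    have hcg := hsupport (c • g) (hsmul c hc g hg)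
    rw [inner_sub_right, real_inner_smul_right, hcdef,
      div_mul_cancel₀ _ (ne_of_gt hpos)] at hcg
    linarith
  have hzle : ⟪u, z⟫ ≤ 0 := by
    have hsub : closure H ⊆ {x : W | ⟪u, x⟫ ≤ 0} :=
      closure_minimal (fun x hx => hneg x hx)
        (isClosed_le (continuous_const.inner continuous_id) continuous_const)
    exact hsub hzc
  exact ⟨u, hu0, hneg, le_antisymm hzle h0z⟩

end SupportTop

section Wrapper

variable {E : Type*} [NormedAddCommGroup E] [InnerProductSpace ℝ E] [FiniteDimensional ℝ E]

private lemma support_exists (G : Set E) (hG0 : (0:E) ∈ G) (hGconv : Convex ℝ G)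
    (hGsmul : ∀ t : ℝ, 0 ≤ t → ∀ g ∈ G, t • g ∈ G)
    {z : E} (hzc : z ∈ closure G) (hz : z ∉ G) :
    ∃ u : E, (∀ g ∈ G, ⟪u, g⟫ ≤ 0) ∧ ⟪u, z⟫ = 0 ∧ ∃ g₀ ∈ G, ⟪u, g₀⟫ < 0 := by
  classical
  set V : Submodule ℝ E := Submodule.span ℝ G with hVdef
  have hGV : G ⊆ (V : Set E) := Submodule.subset_span
  have hVclosed : IsClosed (V : Set E) := Submodule.closed_of_finiteDimensional V
  have hclV : closure G ⊆ (V : Set E) := closure_minimal hGV hVclosed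
  have hzV : z ∈ V := hclV hzc
  set H : Set V := Subtype.val ⁻¹' G with hHdef
  have himgH : Subtype.val '' H = G := by
    apply Set.Subset.antisymm
    · rintro x ⟨y, hy, rfl⟩; exact hy
    · intro x hx; exact ⟨⟨x, hGV hx⟩, hx, rfl⟩
  set z' : V := ⟨z, hzV⟩ with hz'def
  have hH0 : (0 : V) ∈ H := by
    show ((0 : V) : E) ∈ G
    simpa using hG0
  have hHconv : Convex ℝ H := hGconv.linear_preimage V.subtype
  have hHsmul : ∀ t : ℝ, 0 ≤ t → ∀ g ∈ H, t • g ∈ H := by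
    intro t ht g hg
    show ((t • g : V) : E) ∈ G
    rw [Submodule.coe_smul]
    exact hGsmul t ht _ hg
  have hHspan : Submodule.span ℝ H = ⊤ := by
    apply Submodule.map_injective_of_injective V.injective_subtype
    rw [Submodule.map_span, Submodule.map_subtype_top]
    show Submodule.span ℝ (Subtype.val '' H) = V
    rw [himgH, hVdef]
  have hz'c : z' ∈ closure H := by
    rw [closure_subtype, himgH]
    exact hzc
  have hz'H : z' ∉ H := hz
  obtain ⟨u', hu'0, hu'neg, hu'z⟩ := support_top H hH0 hHconv hHsmul hHspan hz'c hz'H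
  refine ⟨(u' : E), ?_, ?_, ?_⟩
  · intro g hg
    have := hu'neg ⟨g, hGV hg⟩ hg
    rwa [Submodule.coe_inner] at this
  · have := hu'z
    rwa [Submodule.coe_inner] at this
  · by_contra hcon
    push_neg at hcon
    have hall : ∀ x ∈ H, ⟪u', x⟫ = 0 := by
      intro x hx
      have h1 := hu'neg x hx
      have h2 := hcon (x : E) hx
      rw [Submodule.coe_inner] at h1 ⊢
      exact le_antisymm h1 h2
    have hker : Submodule.span ℝ H ≤ LinearMap.ker (innerₛₗ ℝ u') := by
      rw [Submodule.span_le]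
      intro x hx
      rw [SetLike.mem_coe, LinearMap.mem_ker, innerₛₗ_apply_apply]
      exact hall x hx
    have : u' ∈ LinearMap.ker (innerₛₗ ℝ u') := by
      apply hker
      rw [hHspan]
      trivial
    rw [LinearMap.mem_ker, innerₛₗ_apply_apply] at this
    exact hu'0 (inner_self_eq_zero.mp this)

private lemma claim_star :
    ∀ n : ℕ, ∀ (B G : Set E) (z : E), IsCompact B → B.Nonempty → Convex ℝ B →
      (0:E) ∈ G → Convex ℝ G → (∀ t : ℝ, 0 ≤ t → ∀ g ∈ G, t • g ∈ G) →
      Module.finrank ℝ (Submodule.span ℝ (insert z G)) ≤ n →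
      (∀ b ∈ B, ∀ g ∈ G, b + g + z ∈ B + G) → z ∈ G := by
  intro n
  induction n with
  | zero =>
    intro B G z _ _ _ hG0 _ _ hrank _
    have hbot : Submodule.span ℝ (insert z G) = ⊥ := by
      rw [← Submodule.finrank_eq_zero (R := ℝ)]
      omega
    have hzmem : z ∈ Submodule.span ℝ (insert z G) :=
      Submodule.subset_span (Set.mem_insert z G)
    rw [hbot, Submodule.mem_bot] at hzmem
    rwa [hzmem]
  | succ n IH =>
    intro B G z hBc hBne hBconv hG0 hGconv hGsmul hrank hyp
    -- iterate the hypothesis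
    have hiter : ∀ m : ℕ, ∀ b ∈ B, ∃ b' ∈ B, ∃ g ∈ G, b + (m:ℝ) • z = b' + g := by
      intro m
      induction m with
      | zero => intro b hb; exact ⟨b, hb, 0, hG0, by simp⟩
      | succ m ih =>
        intro b hb
        obtain ⟨b', hb', g, hg, heq⟩ := ih b hb
        obtain ⟨b'', hb'', g'', hg'', heq2⟩ := Set.mem_add.mp (hyp b' hb' g hg)
        refine ⟨b'', hb'', g'', hg'', ?_⟩
        push_cast
        calc b + ((m:ℝ) + 1) • z = b + (m:ℝ) • z + z := by
              rw [add_smul, one_smul, add_assoc]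
          _ = b' + g + z := by rw [heq]
          _ = b'' + g'' := heq2.symm
    -- z is in the closure of G
    obtain ⟨b₀, hb₀⟩ := hBne
    obtain ⟨R, hR⟩ := isBounded_iff_forall_norm_le.mp hBc.isBounded
    have hR0 : 0 ≤ R := le_trans (norm_nonneg b₀) (hR b₀ hb₀)
    have hzcl : z ∈ closure G := by
      rw [Metric.mem_closure_iff]
      intro ε hε
      obtain ⟨m, hm⟩ := exists_nat_gt (2 * R / ε)
      have hm0 : 0 < (m:ℝ) := lt_of_le_of_lt (by positivity) hm
      obtain ⟨b', hb', g, hg, heq⟩ := hiter m b₀ hb₀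
      refine ⟨(m:ℝ)⁻¹ • g, hGsmul _ (by positivity) g hg, ?_⟩
      have hgz : (m:ℝ) • z - g = b' - b₀ := by
        have h2 : (m:ℝ) • z - g = (b₀ + (m:ℝ) • z) - (b₀ + g) := by abel
        rw [h2, heq]
        abel
      have hexp : z - (m:ℝ)⁻¹ • g = (m:ℝ)⁻¹ • ((m:ℝ) • z - g) := by
        rw [smul_sub, smul_smul, inv_mul_cancel₀ (ne_of_gt hm0), one_smul]
      rw [dist_eq_norm, hexp, hgz, norm_smul, Real.norm_eq_abs,
        abs_of_pos (by positivity : (0:ℝ) < (m:ℝ)⁻¹)]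
      have hb'n : ‖b' - b₀‖ ≤ 2 * R := by
        calc ‖b' - b₀‖ ≤ ‖b'‖ + ‖b₀‖ := norm_sub_le _ _
          _ ≤ R + R := add_le_add (hR _ hb') (hR _ hb₀)
          _ = 2 * R := by ring
      have h2Rm : 2 * R < (m:ℝ) * ε := by
        rwa [div_lt_iff₀ hε] at hm
      calc (m:ℝ)⁻¹ * ‖b' - b₀‖ ≤ (m:ℝ)⁻¹ * (2 * R) :=
            mul_le_mul_of_nonneg_left hb'n (by positivity)
        _ < (m:ℝ)⁻¹ * ((m:ℝ) * ε) :=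
            mul_lt_mul_of_pos_left h2Rm (by positivity)
        _ = ε := by
            rw [← mul_assoc, inv_mul_cancel₀ (ne_of_gt hm0), one_mul]
    by_cases hzG : z ∈ G
    · exact hzG
    obtain ⟨u, huneg, huz, g₀, hg₀G, hg₀⟩ := support_exists G hG0 hGconv hGsmul hzcl hzG
    -- maximize ⟪u, ·⟫ on B
    have hcont : Continuous fun x : E => ⟪u, x⟫ := continuous_const.inner continuous_id
    obtain ⟨b₁, hb₁B, hb₁max⟩ := hBc.exists_isMaxOn ⟨b₀, hb₀⟩ hcont.continuousOn
    set β : ℝ := ⟪u, b₁⟫ with hβdef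
    have hmax : ∀ b ∈ B, ⟪u, b⟫ ≤ β := fun b hb => hb₁max hb
    have hlin : IsLinearMap ℝ fun x : E => ⟪u, x⟫ :=
      ⟨fun x y => inner_add_right u x y, fun c x => real_inner_smul_right u x c⟩
    set B' : Set E := B ∩ {x : E | β ≤ ⟪u, x⟫} with hB'def
    set G' : Set E := G ∩ {x : E | ⟪u, x⟫ = 0} with hG'def
    have hB'c : IsCompact B' :=
      hBc.inter_right (isClosed_le continuous_const hcont)
    have hB'ne : B'.Nonempty := ⟨b₁, hb₁B, le_refl β⟩
    have hB'conv : Convex ℝ B' := hBconv.inter (convex_halfSpace_ge hlin β)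
    have hG'0 : (0:E) ∈ G' := ⟨hG0, inner_zero_right u⟩
    have hG'conv : Convex ℝ G' := hGconv.inter (convex_hyperplane hlin 0)
    have hG'smul : ∀ t : ℝ, 0 ≤ t → ∀ g ∈ G', t • g ∈ G' := by
      rintro t ht g ⟨hgG, hg0⟩
      refine ⟨hGsmul t ht g hgG, ?_⟩
      show ⟪u, t • g⟫ = 0
      rw [real_inner_smul_right, hg0, mul_zero]
    have hyp' : ∀ b ∈ B', ∀ g ∈ G', b + g + z ∈ B' + G' := by
      rintro b ⟨hbB, hbβ⟩ g ⟨hgG, hg0⟩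
      obtain ⟨b', hb', g', hg', heq⟩ := Set.mem_add.mp (hyp b hbB g hgG)
      have hfb : ⟪u, b⟫ = β := le_antisymm (hmax b hbB) hbβ
      have hsum : ⟪u, b'⟫ + ⟪u, g'⟫ = β := by
        rw [← inner_add_right, heq, inner_add_right, inner_add_right, hfb, hg0, huz]
        ring
      have h1 : ⟪u, b'⟫ ≤ β := hmax b' hb'
      have h2 : ⟪u, g'⟫ ≤ 0 := huneg g' hg'
      have hb'β : β ≤ ⟪u, b'⟫ := by linarith
      have hg'0 : ⟪u, g'⟫ = 0 := by linarith
      exact Set.mem_add.mpr ⟨b', ⟨hb', hb'β⟩, g', ⟨hg', hg'0⟩, heq⟩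
    -- rank decreases
    have hV2le : Submodule.span ℝ (insert z G') ≤ LinearMap.ker (innerₛₗ ℝ u) := by
      rw [Submodule.span_le]
      rintro x (rfl | hx)
      · rw [SetLike.mem_coe, LinearMap.mem_ker, innerₛₗ_apply_apply]; exact huz
      · rw [SetLike.mem_coe, LinearMap.mem_ker, innerₛₗ_apply_apply]; exact hx.2
    have hlt : Submodule.span ℝ (insert z G') < Submodule.span ℝ (insert z G) := by
      refine lt_of_le_of_ne
        (Submodule.span_mono (Set.insert_subset_insert fun x hx => hx.1)) ?_
      intro hEq
      have hg₀mem : g₀ ∈ Submodule.span ℝ (insert z G) :=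
        Submodule.subset_span (Set.mem_insert_of_mem _ hg₀G)
      rw [← hEq] at hg₀mem
      have := hV2le hg₀mem
      rw [LinearMap.mem_ker, innerₛₗ_apply_apply] at this
      linarith
    have hrank' : Module.finrank ℝ (Submodule.span ℝ (insert z G')) ≤ n := by
      have h1 := Submodule.finrank_lt_finrank_of_lt hlt
      omega
    exact (IH B' G' z hB'c hB'ne hB'conv hG'0 hG'conv hG'smul hrank' hyp').1

end Wrapper

theorem recCone_image_eq_image_recCone
    {d : ℕ} (K : Set (EuclideanSpace ℝ (Fin d))) (hne : K.Nonempty) (hK : IsMWConvex K)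
    (π : EuclideanSpace ℝ (Fin d) →ₗ[ℝ] EuclideanSpace ℝ (Fin d))
    (hproj : ∀ x, π (π x) = π x) :
    recCone (π '' K) = π '' recCone K := by
  obtain ⟨hKcl, hKconv, K', hK'c, hK'conv, hdec⟩ := hK
  have hπc : Continuous π := π.continuous_of_finiteDimensional
  have hC0 : (0 : EuclideanSpace ℝ (Fin d)) ∈ recCone K := by
    intro w hw l hl
    simpa using hw
  have hCsmul : ∀ t : ℝ, 0 ≤ t → ∀ c ∈ recCone K, t • c ∈ recCone K := by
    intro t ht c hc w hw l hl
    have h1 := hc w hw (l * t) (mul_nonneg hl ht)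
    rwa [smul_smul]
  have hCconv : Convex ℝ (recCone K) := by
    intro c₁ hc₁ c₂ hc₂ a b ha hb hab
    intro w hw l hl
    have h1 := hc₁ w hw l hl
    have h2 := hc₂ w hw l hl
    have h3 := hKconv h1 h2 ha hb hab
    have heq : a • (w + l • c₁) + b • (w + l • c₂) = (a + b) • w + l • (a • c₁ + b • c₂) := by
      module
    rw [heq, hab, one_smul] at h3
    exact h3
  apply Set.Subset.antisymm
  · -- rec(πK) ⊆ π(rec K)
    intro z hz
    set G : Set (EuclideanSpace ℝ (Fin d)) := π '' recCone K with hGdef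
    set B : Set (EuclideanSpace ℝ (Fin d)) := π '' K' with hBdef
    have hK'ne : K'.Nonempty := by
      rcases hne with ⟨x, hx⟩
      rw [hdec] at hx
      obtain ⟨a, ha, c, hc, rfl⟩ := Set.mem_add.mp hx
      exact ⟨a, ha⟩
    have himg : π '' K = B + G := by
      rw [hdec]
      apply Set.Subset.antisymm
      · rintro _ ⟨y, hy, rfl⟩
        obtain ⟨a, ha, c, hc, rfl⟩ := Set.mem_add.mp hy
        exact Set.mem_add.mpr ⟨π a, ⟨a, ha, rfl⟩, π c, ⟨c, hc, rfl⟩, (map_add π a c).symm⟩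
      · intro x hx
        obtain ⟨_, ⟨a, ha, rfl⟩, _, ⟨c, hc, rfl⟩, rfl⟩ := Set.mem_add.mp hx
        exact ⟨a + c, Set.mem_add.mpr ⟨a, ha, c, hc, rfl⟩, map_add π a c⟩
    have hBc : IsCompact B := hK'c.image hπc
    have hBne : B.Nonempty := hK'ne.image π
    have hBconv : Convex ℝ B := hK'conv.linear_image π
    have hG0 : (0 : EuclideanSpace ℝ (Fin d)) ∈ G := ⟨0, hC0, map_zero π⟩
    have hGconv : Convex ℝ G := hCconv.linear_image π
    have hGsmul : ∀ t : ℝ, 0 ≤ t → ∀ g ∈ G, t • g ∈ G := by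
      rintro t ht _ ⟨c, hc, rfl⟩
      exact ⟨t • c, hCsmul t ht c hc, map_smul π t c⟩
    have hyp : ∀ b ∈ B, ∀ g ∈ G, b + g + z ∈ B + G := by
      intro b hb g hg
      have hbg : b + g ∈ π '' K := by
        rw [himg]
        exact Set.mem_add.mpr ⟨b, hb, g, hg, rfl⟩
      have h1 := hz (b + g) hbg 1 zero_le_one
      rw [one_smul] at h1
      rwa [himg] at h1
    exact claim_star (Module.finrank ℝ (Submodule.span ℝ (insert z G))) B G z
      hBc hBne hBconv hG0 hGconv hGsmul le_rfl hyp
  · -- π(rec K) ⊆ rec(πK)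
    rintro _ ⟨c, hc, rfl⟩
    rintro w ⟨x, hx, rfl⟩ l hl
    exact ⟨x + l • c, hc x hx l hl, by rw [map_add, map_smul]⟩
end

section
/- Let E be a Euclidean space of dimension 2, let K ⊆ E × E be MW-convex, and let u = (u_n)_{n∈ℕ} be a sequence in E with (u_n, u_{n+1}) ∈ K for all n ∈ ℕ. Assume that D_u is nonempty and that for all x ∈ Cone(D_u), if (0, x) ∈ rec(K) then x = 0. Then for every x ∈ Cone(D_u) there exists s ∈ Cone(D_u) such that (x, s) ∈ rec(K). -/
open Pointwise

open Filter Topology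

section ConeHullLemmas

variable {F : Type*} [AddCommGroup F] [Module ℝ F] {S : Set F}

lemma coneHull_zero (S : Set F) : (0 : F) ∈ coneHull S :=
  ⟨0, fun i => i.elim0, fun i => i.elim0, fun i => i.elim0, fun i => i.elim0, by simp⟩

lemma mem_coneHull_self {z : F} (hz : z ∈ S) : z ∈ coneHull S :=
  ⟨1, fun _ => 1, fun _ => z, fun _ => zero_le_one, fun _ => hz, by simp⟩

lemma coneHull_smul {r : ℝ} (hr : 0 ≤ r) {y : F} (hy : y ∈ coneHull S) :
    r • y ∈ coneHull S := by
  obtain ⟨m, c, x, h1, h2, rfl⟩ := hy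
  exact ⟨m, fun i => r * c i, x, fun i => mul_nonneg hr (h1 i), h2, by
    rw [Finset.smul_sum]; simp [mul_smul]⟩

lemma coneHull_add {y₁ y₂ : F} (h₁ : y₁ ∈ coneHull S) (h₂ : y₂ ∈ coneHull S) :
    y₁ + y₂ ∈ coneHull S := by
  obtain ⟨m, c, x, hc, hx, rfl⟩ := h₁
  obtain ⟨k, c', x', hc', hx', rfl⟩ := h₂
  refine ⟨m + k, Fin.addCases c c', Fin.addCases x x', ?_, ?_, ?_⟩
  · intro i
    refine Fin.addCases (motive := fun i => (0 : ℝ) ≤ Fin.addCases (motive := fun _ => ℝ) c c' i) ?_ ?_ i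
    · intro j; simpa using hc j
    · intro j; simpa using hc' j
  · intro i
    refine Fin.addCases (motive := fun i => Fin.addCases x x' i ∈ S) ?_ ?_ i
    · intro j; simpa using hx j
    · intro j; simpa using hx' j
  · rw [Fin.sum_univ_add]; simp

end ConeHullLemmas

section RecConeLemmas

variable {F : Type*} [AddCommGroup F] [Module ℝ F] {K : Set F}

lemma recCone_zero (K : Set F) : (0 : F) ∈ recCone K := fun w hw l _ => by simpa using hw

lemma recCone_smul {r : ℝ} (hr : 0 ≤ r) {y : F} (hy : y ∈ recCone K) :
    r • y ∈ recCone K := fun w hw l hl => by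
  simpa [smul_smul] using hy w hw (l * r) (mul_nonneg hl hr)

lemma recCone_add {y₁ y₂ : F} (h₁ : y₁ ∈ recCone K) (h₂ : y₂ ∈ recCone K) :
    y₁ + y₂ ∈ recCone K := fun w hw l hl => by
  have := h₂ _ (h₁ w hw l hl) l hl
  simpa [smul_add, add_assoc] using this

end RecConeLemmas

/-- If points of a closed convex set go to infinity with asymptotic direction `d`
(after rescaling by `a n → ∞`), then `d` is in the recession cone. -/
lemma mem_recCone_of_tendsto {F : Type*} [NormedAddCommGroup F] [NormedSpace ℝ F]
    {K : Set F} (hcl : IsClosed K) (hconv : Convex ℝ K) {p : ℕ → F} (hp : ∀ n, p n ∈ K)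
    {a : ℕ → ℝ} (ha : Tendsto a atTop atTop) {d : F}
    (hd : Tendsto (fun n => (a n)⁻¹ • p n) atTop (𝓝 d)) : d ∈ recCone K := by
  intro w hw l hl
  have hinv : Tendsto (fun n => l * (a n)⁻¹) atTop (𝓝 0) := by
    simpa using tendsto_const_nhds.mul ha.inv_tendsto_atTop
  have hc1 : Tendsto (fun n : ℕ => 1 - l * (a n)⁻¹) atTop (𝓝 1) := by
    simpa using (tendsto_const_nhds (x := (1 : ℝ))).sub hinv
  have h1 : Tendsto (fun n => (1 - l * (a n)⁻¹) • w + l • ((a n)⁻¹ • p n)) atTop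
      (𝓝 (w + l • d)) := by
    simpa using (hc1.smul (tendsto_const_nhds (x := w))).add
      ((tendsto_const_nhds (x := l)).smul hd)
  refine hcl.mem_of_tendsto h1 ?_
  filter_upwards [ha.eventually_ge_atTop (max l 1)] with n hn
  have hl1 : l ≤ a n := le_trans (le_max_left _ _) hn
  have hpos : (0 : ℝ) < a n := lt_of_lt_of_le one_pos (le_trans (le_max_right _ _) hn)
  have ht0 : 0 ≤ l * (a n)⁻¹ := mul_nonneg hl (inv_nonneg.mpr hpos.le)
  have ht1 : l * (a n)⁻¹ ≤ 1 := by
    rw [← div_eq_mul_inv]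
    exact div_le_one_of_le₀ hl1 hpos.le
  have := hconv hw (hp n) (by linarith : (0:ℝ) ≤ 1 - l * (a n)⁻¹) ht0 (by ring)
  simpa [smul_smul] using this

/-- Key step: for a single principal direction `z` there is `s` in the conic hull of
the principal directions with `(z, s)` in the recession cone. -/
lemma key_step {E : Type*} [NormedAddCommGroup E] [InnerProductSpace ℝ E]
    [FiniteDimensional ℝ E]
    {K : Set (E × E)} (hcl : IsClosed K) (hconv : Convex ℝ K)
    {u : ℕ → E} (hu : ∀ n : ℕ, (u n, u (n + 1)) ∈ K)
    (hrec : ∀ x ∈ coneHull (principalDirections u), ((0 : E), x) ∈ recCone K → x = 0)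
    {z : E} (hz : z ∈ principalDirections u) :
    ∃ s ∈ coneHull (principalDirections u), ((z, s) : E × E) ∈ recCone K := by
  obtain ⟨hz1, φ, hφ, hφnorm, hφdir⟩ := hz
  set q : ℕ → E × E := fun n => (u (φ n), u (φ n + 1)) with hq
  set a : ℕ → ℝ := fun n => ‖q n‖ with ha_def
  have hqK : ∀ n, q n ∈ K := fun n => hu (φ n)
  have ha0 : ∀ n, 0 ≤ a n := fun n => norm_nonneg _
  have hfle : ∀ n, ‖u (φ n)‖ ≤ a n := fun n => norm_fst_le (q n)
  have ha : Tendsto a atTop atTop := tendsto_atTop_mono hfle hφnorm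
  set r : ℕ → (E × E) × ℝ := fun n => ((a n)⁻¹ • q n, ‖u (φ n)‖ / a n) with hr_def
  have hr_norm : ∀ n, ‖r n‖ ≤ 1 := by
    intro n
    rw [Prod.norm_def]
    refine max_le ?_ ?_
    · rw [norm_smul, norm_inv, Real.norm_eq_abs, abs_of_nonneg (ha0 n)]
      rcases eq_or_lt_of_le (ha0 n) with h | h
      · simp [← h]
      · rw [inv_mul_cancel₀ h.ne']
    · rw [Real.norm_eq_abs, abs_of_nonneg (div_nonneg (norm_nonneg _) (ha0 n))]
      rcases eq_or_lt_of_le (ha0 n) with h | h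
      · simp [← h]
      · exact div_le_one_of_le₀ (hfle n) (ha0 n)
  obtain ⟨⟨⟨d₁, d₂⟩, t⟩, -, ψ, hψ, hL⟩ :=
    tendsto_subseq_of_bounded (Metric.isBounded_closedBall (x := (0 : (E × E) × ℝ)) (r := 1))
      (fun n => by simpa [Metric.mem_closedBall, dist_zero_right] using hr_norm n)
  have haψ : Tendsto (fun n => a (ψ n)) atTop atTop := ha.comp hψ.tendsto_atTop
  have hDlim : Tendsto (fun n => (a (ψ n))⁻¹ • q (ψ n)) atTop (𝓝 (d₁, d₂)) :=
    (continuous_fst.tendsto _).comp hL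
  have hTlim : Tendsto (fun n => ‖u (φ (ψ n))‖ / a (ψ n)) atTop (𝓝 t) :=
    (continuous_snd.tendsto _).comp hL
  have hd1lim : Tendsto (fun n => (a (ψ n))⁻¹ • u (φ (ψ n))) atTop (𝓝 d₁) :=
    (continuous_fst.tendsto _).comp hDlim
  have hd2lim : Tendsto (fun n => (a (ψ n))⁻¹ • u (φ (ψ n) + 1)) atTop (𝓝 d₂) :=
    (continuous_snd.tendsto _).comp hDlim
  have hrecd : ((d₁, d₂) : E × E) ∈ recCone K :=
    mem_recCone_of_tendsto hcl hconv (fun n => hqK (ψ n)) haψ hDlim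
  have hev1 : ∀ᶠ n in atTop, 1 ≤ a (ψ n) := haψ.eventually_ge_atTop 1
  have hevu : ∀ᶠ n in atTop, 1 ≤ ‖u (φ (ψ n))‖ :=
    (hφnorm.comp hψ.tendsto_atTop).eventually_ge_atTop 1
  have hnorm1 : ‖((d₁, d₂) : E × E)‖ = 1 := by
    have h1 : Tendsto (fun n => ‖(a (ψ n))⁻¹ • q (ψ n)‖) atTop (𝓝 ‖((d₁, d₂) : E × E)‖) :=
      hDlim.norm
    have h2 : ∀ᶠ n in atTop, ‖(a (ψ n))⁻¹ • q (ψ n)‖ = 1 := by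
      filter_upwards [hev1] with n hn
      have hpos : (0 : ℝ) < a (ψ n) := lt_of_lt_of_le one_pos hn
      rw [norm_smul, norm_inv, Real.norm_eq_abs, abs_of_pos hpos, inv_mul_cancel₀ hpos.ne']
    exact tendsto_nhds_unique ((tendsto_congr' h2).mp h1) tendsto_const_nhds
  have hd1 : d₁ = t • z := by
    have h1 : Tendsto (fun n => (‖u (φ (ψ n))‖ / a (ψ n)) • (‖u (φ (ψ n))‖⁻¹ • u (φ (ψ n))))
        atTop (𝓝 (t • z)) := hTlim.smul (hφdir.comp hψ.tendsto_atTop)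
    have h2 : ∀ᶠ n in atTop,
        (‖u (φ (ψ n))‖ / a (ψ n)) • (‖u (φ (ψ n))‖⁻¹ • u (φ (ψ n)))
          = (a (ψ n))⁻¹ • u (φ (ψ n)) := by
      filter_upwards [hevu, hev1] with n hn han
      have hne : ‖u (φ (ψ n))‖ ≠ 0 := (lt_of_lt_of_le one_pos hn).ne'
      have hane : a (ψ n) ≠ 0 := (lt_of_lt_of_le one_pos han).ne'
      rw [smul_smul]
      congr 1
      field_simp
    exact (tendsto_nhds_unique ((tendsto_congr' h2).mp h1) hd1lim).symm
  have ht0 : 0 ≤ t := ge_of_tendsto' hTlim fun n => div_nonneg (norm_nonneg _) (ha0 _)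
  have hs2 : d₂ ∈ coneHull (principalDirections u) := by
    rcases eq_or_ne d₂ 0 with h | h
    · rw [h]; exact coneHull_zero _
    · have hnd2 : 0 < ‖d₂‖ := norm_pos_iff.mpr h
      have hblim : Tendsto (fun n => (a (ψ n))⁻¹ * ‖u (φ (ψ n) + 1)‖) atTop (𝓝 ‖d₂‖) := by
        refine (tendsto_congr' ?_).mp hd2lim.norm
        filter_upwards [hev1] with n hn
        rw [norm_smul, norm_inv, Real.norm_eq_abs, abs_of_pos (lt_of_lt_of_le one_pos hn)]
      have hnormto : Tendsto (fun n => ‖u (φ (ψ n) + 1)‖) atTop atTop := by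
        have hhalf : Tendsto (fun n => (‖d₂‖ / 2) * a (ψ n)) atTop atTop :=
          haψ.const_mul_atTop (by positivity)
        refine tendsto_atTop_mono' atTop ?_ hhalf
        filter_upwards [hev1,
          hblim.eventually (eventually_ge_nhds (by linarith : ‖d₂‖ / 2 < ‖d₂‖))] with n hn hbn
        have hpos : (0 : ℝ) < a (ψ n) := lt_of_lt_of_le one_pos hn
        have h3 : a (ψ n) * (‖d₂‖ / 2) ≤ a (ψ n) * ((a (ψ n))⁻¹ * ‖u (φ (ψ n) + 1)‖) :=
          mul_le_mul_of_nonneg_left hbn hpos.le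
        rw [← mul_assoc, mul_inv_cancel₀ hpos.ne', one_mul] at h3
        linarith
      have hunit : Tendsto (fun n => ‖u (φ (ψ n) + 1)‖⁻¹ • u (φ (ψ n) + 1)) atTop
          (𝓝 (‖d₂‖⁻¹ • d₂)) := by
        have h1 : Tendsto (fun n => ((a (ψ n))⁻¹ * ‖u (φ (ψ n) + 1)‖)⁻¹ •
            ((a (ψ n))⁻¹ • u (φ (ψ n) + 1))) atTop (𝓝 (‖d₂‖⁻¹ • d₂)) :=
          (hblim.inv₀ hnd2.ne').smul hd2lim
        refine (tendsto_congr' ?_).mp h1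
        filter_upwards [hev1, hnormto.eventually_ge_atTop 1] with n h1n h2n
        have ha' : a (ψ n) ≠ 0 := (lt_of_lt_of_le one_pos h1n).ne'
        have hv' : ‖u (φ (ψ n) + 1)‖ ≠ 0 := (lt_of_lt_of_le one_pos h2n).ne'
        rw [smul_smul]
        congr 1
        field_simp
      have hχ : StrictMono (fun n => φ (ψ n) + 1) := fun m n h =>
        Nat.add_lt_add_right ((hφ.comp hψ) h) 1
      have hw : (‖d₂‖⁻¹ • d₂) ∈ principalDirections u :=
        ⟨by rw [norm_smul, norm_inv, Real.norm_eq_abs, abs_of_pos hnd2,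
            inv_mul_cancel₀ hnd2.ne'], fun n => φ (ψ n) + 1, hχ, hnormto, hunit⟩
      have h4 := coneHull_smul hnd2.le (mem_coneHull_self hw)
      rwa [smul_inv_smul₀ hnd2.ne'] at h4
  rcases eq_or_lt_of_le ht0 with h | h
  · exfalso
    have h0 : d₁ = 0 := by rw [hd1, ← h, zero_smul]
    have h5 : d₂ = 0 := hrec d₂ hs2 (by rwa [h0] at hrecd)
    rw [h0, h5] at hnorm1
    simp at hnorm1
  · refine ⟨t⁻¹ • d₂, coneHull_smul (inv_nonneg.mpr ht0) hs2, ?_⟩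
    have h6 := recCone_smul (inv_nonneg.mpr ht0) hrecd
    have heq : (t⁻¹ : ℝ) • ((d₁, d₂) : E × E) = (z, t⁻¹ • d₂) := by
      rw [Prod.smul_mk, hd1, smul_smul, inv_mul_cancel₀ h.ne', one_smul]
    rwa [heq] at h6

theorem exists_successor_in_recCone
    {E : Type*} [NormedAddCommGroup E] [InnerProductSpace ℝ E] [FiniteDimensional ℝ E]
    (hdim : Module.finrank ℝ E = 2)
    (K : Set (E × E)) (hK : IsMWConvex K)
    (u : ℕ → E) (hu : ∀ n : ℕ, (u n, u (n + 1)) ∈ K)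
    (hDne : (principalDirections u).Nonempty)
    (hrec : ∀ x ∈ coneHull (principalDirections u), ((0 : E), x) ∈ recCone K → x = 0) :
    ∀ x ∈ coneHull (principalDirections u),
      ∃ s ∈ coneHull (principalDirections u), ((x, s) : E × E) ∈ recCone K := by
  obtain ⟨hcl, hconv, -⟩ := hK
  intro x hx
  obtain ⟨m, c, zf, hc, hzf, rfl⟩ := hx
  have hkey : ∀ i : Fin m, ∃ s ∈ coneHull (principalDirections u),
      ((zf i, s) : E × E) ∈ recCone K := fun i => key_step hcl hconv hu hrec (hzf i)
  choose s hs1 hs2 using hkey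
  refine ⟨∑ i, c i • s i, ?_, ?_⟩
  · exact Finset.sum_induction _ (· ∈ coneHull (principalDirections u))
      (fun _ _ ha hb => coneHull_add ha hb) (coneHull_zero _)
      (fun i _ => coneHull_smul (hc i) (hs1 i))
  · have heq : ((∑ i, c i • zf i, ∑ i, c i • s i) : E × E) = ∑ i, c i • ((zf i, s i) : E × E) := by
      rw [Prod.ext_iff]
      constructor
      · rw [Prod.fst_sum]; simp
      · rw [Prod.snd_sum]; simp
    rw [heq]
    exact Finset.sum_induction _ (· ∈ recCone K)
      (fun _ _ ha hb => recCone_add ha hb) (recCone_zero _)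
      (fun i _ => recCone_smul (hc i) (hs2 i))
end
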